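/- arXiv:2506.18287 — 12 statements merged into one kernel-verified Lean document; each statement's English description precedes it below -/
import Mathlib

section
/- Let p be an odd prime and let x be a p-adic integer with m = ⟨x⟩_p ≤ (p-1)/2, and set t = (x - m)/p ∈ ℤ_p. Then for every integer k with 0 ≤ k ≤ m, one has C(x,k)·C(x+k,k) ≡ C(m,k)·C(m+k,k)·(1 + p·t·H_{m+k} - p·t·H_{m-k}) (mod p^2) in ℤ_p. -/
/-- Generalized binomial coefficient `C(x,k) = x(x-1)⋯(x-k+1)/k!` in `ℚ_[p]`. -/
noncomputable def qchoose {p : ℕ} [Fact p.Prime] (x : ℚ_[p]) (k : ℕ) : ℚ_[p] :=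
  (∏ i ∈ Finset.range k, (x - i)) / (k.factorial : ℚ_[p])

/-- The `n`-th harmonic number `H_n = ∑_{i=1}^n 1/i`, as an element of `ℚ_[p]`. -/
noncomputable def hNum (p : ℕ) [Fact p.Prime] (n : ℕ) : ℚ_[p] :=
  ∑ i ∈ Finset.range n, ((i : ℚ_[p]) + 1)⁻¹

open Finset

/-- First-order expansion of a product of shifted factors, with explicit `c²` remainder. -/
lemma prod_expand {R : Type*} [CommRing R] (s : Finset ℕ) (a : ℕ → R) (c : R) :
    ∃ r : R, ∏ j ∈ s, (a j + c) =
      ∏ j ∈ s, a j + c * ∑ j ∈ s, ∏ i ∈ s.erase j, a i + c ^ 2 * r := by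
  classical
  induction s using Finset.induction_on with
  | empty => exact ⟨0, by simp⟩
  | @insert x s hx ih =>
    obtain ⟨r, hr⟩ := ih
    refine ⟨a x * r + (∑ j ∈ s, ∏ i ∈ s.erase j, a i) + c * r, ?_⟩
    have hsum : ∑ j ∈ insert x s, ∏ i ∈ (insert x s).erase j, a i
        = ∏ j ∈ s, a j + a x * ∑ j ∈ s, ∏ i ∈ s.erase j, a i := by
      rw [Finset.sum_insert hx, Finset.erase_insert hx, Finset.mul_sum]
      congr 1
      refine Finset.sum_congr rfl fun j hj => ?_
      have hxj : x ≠ j := fun h => hx (h ▸ hj)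
      rw [Finset.erase_insert_of_ne hxj,
        Finset.prod_insert (fun h => hx (Finset.mem_of_mem_erase h))]
    rw [Finset.prod_insert hx, hr, Finset.prod_insert hx, hsum]
    ring

lemma hsum_eq {p : ℕ} [Fact p.Prime] (n k : ℕ) (hk : k ≤ n) :
    ∑ j ∈ Finset.range k, (((n - j : ℕ) : ℚ_[p]))⁻¹ = hNum p n - hNum p (n - k) := by
  have h1 : hNum p (n - k) + ∑ i ∈ Finset.Ico (n - k) n, ((i : ℚ_[p]) + 1)⁻¹ = hNum p n := by
    rw [hNum, hNum]
    exact Finset.sum_range_add_sum_Ico _ (Nat.sub_le n k)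
  rw [← h1]
  rw [Finset.sum_Ico_eq_sum_range]
  have h2 : n - (n - k) = k := by omega
  rw [h2, ← Finset.sum_range_reflect (fun j => (((n - j : ℕ) : ℚ_[p]))⁻¹) k]
  have h3 : ∑ j ∈ Finset.range k, (((n - (k - 1 - j) : ℕ) : ℚ_[p]))⁻¹
      = ∑ j ∈ Finset.range k, (((n - k + j : ℕ) : ℚ_[p]) + 1)⁻¹ := by
    refine Finset.sum_congr rfl fun j hj => ?_
    have hj' : j < k := Finset.mem_range.mp hj
    have : n - (k - 1 - j) = (n - k + j) + 1 := by omega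
    rw [this]
    push_cast
    ring_nf
  rw [h3]
  ring

lemma sum_prod_erase {p : ℕ} [Fact p.Prime] (s : Finset ℕ) (a : ℕ → ℚ_[p])
    (ha : ∀ j ∈ s, a j ≠ 0) :
    ∑ j ∈ s, ∏ i ∈ s.erase j, a i = (∏ j ∈ s, a j) * ∑ j ∈ s, (a j)⁻¹ := by
  rw [Finset.mul_sum]
  refine Finset.sum_congr rfl fun j hj => ?_
  have := Finset.prod_erase_mul s a hj
  field_simp [ha j hj]
  linear_combination this


lemma padic_coe_prod {p : ℕ} [Fact p.Prime] (s : Finset ℕ) (f : ℕ → ℤ_[p]) :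
    ((∏ i ∈ s, f i : ℤ_[p]) : ℚ_[p]) = ∏ i ∈ s, (f i : ℚ_[p]) :=
  map_prod PadicInt.Coe.ringHom f s

lemma padic_coe_sum {p : ℕ} [Fact p.Prime] (s : Finset ℕ) (f : ℕ → ℤ_[p]) :
    ((∑ i ∈ s, f i : ℤ_[p]) : ℚ_[p]) = ∑ i ∈ s, (f i : ℚ_[p]) :=
  map_sum PadicInt.Coe.ringHom f s

/-- Let `p` be an odd prime, `x` a `p`-adic integer with `m = ⟨x⟩_p ≤ (p-1)/2` and
`t = (x - m)/p ∈ ℤ_p`. Then for `0 ≤ k ≤ m`,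
`C(x,k) C(x+k,k) ≡ C(m,k) C(m+k,k) (1 + p t H_{m+k} - p t H_{m-k}) (mod p^2)`. -/
theorem stmt1 (p : ℕ) [Fact p.Prime] (hp : Odd p) (x t : ℤ_[p]) (m : ℕ)
    (hm : m ≤ (p - 1) / 2) (hx : x = (m : ℤ_[p]) + p * t) (k : ℕ) (hk : k ≤ m) :
    ‖qchoose (x : ℚ_[p]) k * qchoose ((x : ℚ_[p]) + (k : ℚ_[p])) k -
        qchoose (m : ℚ_[p]) k * qchoose ((m : ℚ_[p]) + (k : ℚ_[p])) k *
          (1 + (p : ℚ_[p]) * (t : ℚ_[p]) * hNum p (m + k)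
            - (p : ℚ_[p]) * (t : ℚ_[p]) * hNum p (m - k))‖
      ≤ (p : ℝ) ^ (-2 : ℤ) := by
  have hpPrime : p.Prime := Fact.out
  have hp1 : 1 < p := hpPrime.one_lt
  have hp2 : 2 * m ≤ p - 1 := by
    obtain ⟨j, hj⟩ := hp
    omega
  have hkp : k < p := by omega
  -- factorial is a unit
  have hfac : ‖((k.factorial : ℕ) : ℚ_[p])‖ = 1 := by
    have hle : ‖((k.factorial : ℤ) : ℚ_[p])‖ ≤ 1 := Padic.norm_int_le_one _
    have hnlt : ¬ ‖((k.factorial : ℤ) : ℚ_[p])‖ < 1 := by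
      rw [Padic.norm_intCast_lt_one_iff]
      intro hdvd
      have : p ∣ k.factorial := by exact_mod_cast hdvd
      have := (Nat.Prime.dvd_factorial hpPrime).mp this
      omega
    have : ‖((k.factorial : ℤ) : ℚ_[p])‖ = 1 := le_antisymm hle (not_lt.mp hnlt)
    simpa using this
  set c : ℤ_[p] := (p : ℤ_[p]) * t with hc
  set a1 : ℕ → ℤ_[p] := fun j => ((m - j : ℕ) : ℤ_[p]) with ha1
  set a2 : ℕ → ℤ_[p] := fun j => ((m + k - j : ℕ) : ℤ_[p]) with ha2
  obtain ⟨r1, hr1⟩ := prod_expand (range k) a1 c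
  obtain ⟨r2, hr2⟩ := prod_expand (range k) a2 c
  set P1 : ℤ_[p] := ∏ j ∈ range k, a1 j with hP1
  set P2 : ℤ_[p] := ∏ j ∈ range k, a2 j with hP2
  set S1 : ℤ_[p] := ∑ j ∈ range k, ∏ i ∈ (range k).erase j, a1 i with hS1
  set S2 : ℤ_[p] := ∑ j ∈ range k, ∏ i ∈ (range k).erase j, a2 i with hS2
  -- numerators over ℚ_[p]
  have hnum1 : ∏ i ∈ range k, ((x : ℚ_[p]) - i) = ((P1 + c * S1 + c ^ 2 * r1 : ℤ_[p]) : ℚ_[p]) := by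
    rw [← hr1, padic_coe_prod]
    refine Finset.prod_congr rfl fun i hi => ?_
    have hi' : i < k := Finset.mem_range.mp hi
    have hle : (i : ℕ) ≤ m := by omega
    have hxq : (x : ℚ_[p]) = (m : ℚ_[p]) + (c : ℚ_[p]) := by
      rw [hx]; push_cast; ring
    rw [hxq]
    simp only [ha1]
    push_cast [Nat.cast_sub hle]
    ring
  have hnum2 : ∏ i ∈ range k, ((x : ℚ_[p]) + (k : ℚ_[p]) - i)
      = ((P2 + c * S2 + c ^ 2 * r2 : ℤ_[p]) : ℚ_[p]) := by
    rw [← hr2, padic_coe_prod]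
    refine Finset.prod_congr rfl fun i hi => ?_
    have hi' : i < k := Finset.mem_range.mp hi
    have hle : (i : ℕ) ≤ m + k := by omega
    have hxq : (x : ℚ_[p]) = (m : ℚ_[p]) + (c : ℚ_[p]) := by
      rw [hx]; push_cast; ring
    rw [hxq]
    simp only [ha2]
    push_cast [Nat.cast_sub hle]
    ring
  have hnum1m : ∏ i ∈ range k, ((m : ℚ_[p]) - i) = ((P1 : ℤ_[p]) : ℚ_[p]) := by
    rw [hP1, padic_coe_prod]
    refine Finset.prod_congr rfl fun i hi => ?_
    have hi' : i < k := Finset.mem_range.mp hi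
    have hle : (i : ℕ) ≤ m := by omega
    simp only [ha1]
    push_cast [Nat.cast_sub hle]
    ring
  have hnum2m : ∏ i ∈ range k, ((m : ℚ_[p]) + (k : ℚ_[p]) - i) = ((P2 : ℤ_[p]) : ℚ_[p]) := by
    rw [hP2, padic_coe_prod]
    refine Finset.prod_congr rfl fun i hi => ?_
    have hi' : i < k := Finset.mem_range.mp hi
    have hle : (i : ℕ) ≤ m + k := by omega
    simp only [ha2]
    push_cast [Nat.cast_sub hle]
    ring
  -- harmonic identities
  have hS1q : ((S1 : ℤ_[p]) : ℚ_[p]) = ((P1 : ℤ_[p]) : ℚ_[p]) * (hNum p m - hNum p (m - k)) := by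
    have hne : ∀ j ∈ range k, (((m - j : ℕ) : ℚ_[p])) ≠ 0 := by
      intro j hj
      have hj' : j < k := Finset.mem_range.mp hj
      have : m - j ≠ 0 := by omega
      exact_mod_cast Nat.cast_ne_zero.mpr this
    have h := sum_prod_erase (p := p) (range k) (fun j => ((m - j : ℕ) : ℚ_[p])) hne
    simp only at h
    have hkey : ((S1 : ℤ_[p]) : ℚ_[p])
        = ∑ j ∈ range k, ∏ i ∈ (range k).erase j, ((m - i : ℕ) : ℚ_[p]) := by
      simp only [hS1, ha1, padic_coe_sum, padic_coe_prod, PadicInt.coe_natCast]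
    have hkeyP : ((P1 : ℤ_[p]) : ℚ_[p]) = ∏ j ∈ range k, ((m - j : ℕ) : ℚ_[p]) := by
      simp only [hP1, ha1, padic_coe_prod, PadicInt.coe_natCast]
    rw [hkey, hkeyP, h, hsum_eq m k hk]
  have hS2q : ((S2 : ℤ_[p]) : ℚ_[p]) = ((P2 : ℤ_[p]) : ℚ_[p]) * (hNum p (m + k) - hNum p m) := by
    have hne : ∀ j ∈ range k, (((m + k - j : ℕ) : ℚ_[p])) ≠ 0 := by
      intro j hj
      have hj' : j < k := Finset.mem_range.mp hj
      have : m + k - j ≠ 0 := by omega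
      exact_mod_cast Nat.cast_ne_zero.mpr this
    have h := sum_prod_erase (p := p) (range k) (fun j => ((m + k - j : ℕ) : ℚ_[p])) hne
    simp only at h
    have hmkk : m + k - k = m := by omega
    have hkey : ((S2 : ℤ_[p]) : ℚ_[p])
        = ∑ j ∈ range k, ∏ i ∈ (range k).erase j, ((m + k - i : ℕ) : ℚ_[p]) := by
      simp only [hS2, ha2, padic_coe_sum, padic_coe_prod, PadicInt.coe_natCast]
    have hkeyP : ((P2 : ℤ_[p]) : ℚ_[p]) = ∏ j ∈ range k, ((m + k - j : ℕ) : ℚ_[p]) := by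
      simp only [hP2, ha2, padic_coe_prod, PadicInt.coe_natCast]
    rw [hkey, hkeyP, h, hsum_eq (m + k) k (by omega), hmkk]
  -- the remainder
  set R : ℤ_[p] := S1 * S2 + r1 * P2 + r2 * P1 + c * (S1 * r2 + S2 * r1) + c ^ 2 * (r1 * r2)
    with hR
  -- main algebraic identity
  have hmain : qchoose (x : ℚ_[p]) k * qchoose ((x : ℚ_[p]) + (k : ℚ_[p])) k -
      qchoose (m : ℚ_[p]) k * qchoose ((m : ℚ_[p]) + (k : ℚ_[p])) k *
        (1 + (p : ℚ_[p]) * (t : ℚ_[p]) * hNum p (m + k)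
          - (p : ℚ_[p]) * (t : ℚ_[p]) * hNum p (m - k))
      = ((c ^ 2 * R : ℤ_[p]) : ℚ_[p]) / (((k.factorial : ℕ) : ℚ_[p]) * (k.factorial : ℚ_[p])) := by
    have hfne : ((k.factorial : ℕ) : ℚ_[p]) ≠ 0 := by
      intro h
      rw [h] at hfac
      simp at hfac
    rw [qchoose, qchoose, qchoose, qchoose, hnum1, hnum2, hnum1m, hnum2m]
    have hcq : ((c : ℤ_[p]) : ℚ_[p]) = (p : ℚ_[p]) * (t : ℚ_[p]) := by
      rw [hc]; push_cast; ring
    rw [div_mul_div_comm, div_mul_div_comm, div_mul_eq_mul_div, div_sub_div_same]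
    congr 1
    rw [← hcq]
    push_cast [hR]
    linear_combination ((c : ℤ_[p]) : ℚ_[p]) * ((P1 : ℤ_[p]) : ℚ_[p]) * hS2q
        + ((c : ℤ_[p]) : ℚ_[p]) * ((P2 : ℤ_[p]) : ℚ_[p]) * hS1q
  rw [hmain]
  rw [norm_div]
  have hnormden : ‖((k.factorial : ℕ) : ℚ_[p]) * (k.factorial : ℚ_[p])‖ = 1 := by
    rw [norm_mul, hfac]; ring
  rw [hnormden, div_one]
  rw [PadicInt.padic_norm_e_of_padicInt]
  have hcnorm : ‖c‖ ≤ (p : ℝ)⁻¹ := by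
    rw [hc, norm_mul, PadicInt.norm_p]
    have := PadicInt.norm_le_one t
    nlinarith [norm_nonneg t, (show (0:ℝ) ≤ (p:ℝ)⁻¹ by positivity)]
  calc ‖c ^ 2 * R‖ = ‖c‖ ^ 2 * ‖R‖ := by
        simp only [sq, norm_mul]
    _ ≤ ((p : ℝ)⁻¹) ^ 2 * 1 := by
        have h1 := PadicInt.norm_le_one R
        have h2 : (0:ℝ) ≤ ‖c‖ := norm_nonneg c
        have h3 : (0:ℝ) ≤ (p : ℝ)⁻¹ := by positivity
        have h4 : ‖c‖ ^ 2 ≤ ((p : ℝ)⁻¹) ^ 2 := by nlinarith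
        nlinarith [norm_nonneg R]
    _ = (p : ℝ) ^ (-2 : ℤ) := by
        rw [mul_one, zpow_neg, ← zpow_natCast]
        norm_num
end

section
/- Let p be an odd prime and let x be a p-adic integer with m = ⟨x⟩_p ≤ (p-1)/2, and set t = (x - m)/p ∈ ℤ_p. Then for every integer k with p - m ≤ k ≤ p - 1, one has C(x,k)·C(x+k,k) ≡ (-1)^m · p^2 · t·(t+1) / (k·(k-m)·C(m,p-k)·C(k,m)) (mod p^3) in ℤ_p, where the denominator is a p-adic unit. -/
lemma neg_one_pow_congr' {R : Type*} [Monoid R] [HasDistribNeg R] {a b : ℕ} (h : a % 2 = b % 2) :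
    (-1 : R) ^ a = (-1) ^ b := by
  conv_lhs => rw [← Nat.div_add_mod a 2]
  conv_rhs => rw [← Nat.div_add_mod b 2]
  rw [pow_add, pow_add, pow_mul, pow_mul, neg_one_sq, one_pow, one_pow, h]

lemma prod_erase_int (n k : ℕ) (hnk : n < k) :
    ∏ i ∈ (Finset.range k).erase n, ((n : ℤ) - i) =
      (-1) ^ (k - 1 - n) * n.factorial * (k - 1 - n).factorial := by
  induction k, hnk using Nat.le_induction with
  | base =>
      rw [Finset.range_add_one, Finset.erase_insert Finset.notMem_range_self]
      have h1 : ∏ i ∈ Finset.range n, ((n : ℤ) - i)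
          = ∏ i ∈ Finset.range n, ((n - i : ℕ) : ℤ) := by
        refine Finset.prod_congr rfl fun i hi => ?_
        rw [Nat.cast_sub (le_of_lt (Finset.mem_range.mp hi))]
      rw [h1, ← Nat.cast_prod, ← Nat.descFactorial_eq_prod_range, Nat.descFactorial_self]
      simp
  | succ k hk ih =>
      rw [Finset.range_add_one, Finset.erase_insert_of_ne (by omega : k ≠ n),
        Finset.prod_insert (by simp), ih]
      have h3 : k + 1 - 1 - n = (k - 1 - n) + 1 := by omega
      rw [h3, pow_succ, Nat.factorial_succ]
      have h4 : ((k - 1 - n : ℕ) : ℤ) = (k : ℤ) - 1 - n := by omega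
      push_cast [h4]
      ring

lemma wilson_aux (p : ℕ) [Fact p.Prime] (j : ℕ) (hj : j ≤ p - 1) :
    (j.factorial : ZMod p) * ((p - 1 - j).factorial : ZMod p) = (-1) ^ (j + 1) := by
  induction j with
  | zero => simpa using ZMod.wilsons_lemma p
  | succ n ih =>
      have hp2 : 2 ≤ p := (Fact.out : p.Prime).two_le
      have hn : n ≤ p - 1 := by omega
      have h1 : p - 1 - n = (p - 1 - (n + 1)) + 1 := by omega
      have h2 : ((p - 1 - (n + 1) + 1 : ℕ) : ZMod p) = -((n : ZMod p) + 1) := by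
        have h3 : (p - 1 - (n + 1) + 1) + (n + 1) = p := by omega
        have h4 := congrArg (Nat.cast : ℕ → ZMod p) h3
        rw [ZMod.natCast_self] at h4
        push_cast at h4
        push_cast
        linear_combination h4
      specialize ih hn
      rw [h1, Nat.factorial_succ, Nat.cast_mul, h2] at ih
      rw [Nat.factorial_succ, pow_succ]
      push_cast
      linear_combination -ih

lemma key_zmod (p : ℕ) [Fact p.Prime] (hp : Odd p) (m k : ℕ) (hm1 : 1 ≤ m)
    (hmk : m < k) (hkp : k ≤ p - 1) (hpk : p - m ≤ k) :
    ((-1) ^ (k - 1 - m) * (m.factorial : ZMod p) * ((k - 1 - m).factorial : ZMod p)) *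
      ((-1) ^ (p - 1 - m) * ((m + k - p).factorial : ZMod p) *
        ((p - 1 - m).factorial : ZMod p)) *
      ((k : ZMod p) * ((k - m : ℕ) : ZMod p) * (m.choose (p - k) : ZMod p) *
        (k.choose m : ZMod p))
    = (-1) ^ m * (k.factorial : ZMod p) ^ 2 := by
  have hp2 : 2 ≤ p := (Fact.out : p.Prime).two_le
  have hpodd : p % 2 = 1 := Nat.odd_iff.mp hp
  have hfac_ne : ∀ n : ℕ, n < p → ((n.factorial : ZMod p) ≠ 0) := by
    intro n hn h
    rw [ZMod.natCast_eq_zero_iff] at h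
    have := (Nat.Prime.dvd_factorial (Fact.out : p.Prime)).mp h
    omega
  have hc_ne : (m.factorial : ZMod p) * ((p - k).factorial : ZMod p) ≠ 0 :=
    mul_ne_zero (hfac_ne m (by omega)) (hfac_ne (p - k) (by omega))
  apply mul_right_cancel₀ hc_ne
  have n2 : m.choose (p - k) * (p - k).factorial * (m + k - p).factorial = m.factorial := by
    have h := Nat.choose_mul_factorial_mul_factorial (show p - k ≤ m by omega)
    rwa [show m - (p - k) = m + k - p by omega] at h
  have h1 : (m.choose (p - k) : ZMod p) * ((p - k).factorial : ZMod p) *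
      ((m + k - p).factorial : ZMod p) = (m.factorial : ZMod p) := by
    have := congrArg (Nat.cast : ℕ → ZMod p) n2; push_cast at this; exact_mod_cast this
  have n1 : k.choose m * (m.factorial * ((k - m) * (k - 1 - m).factorial)) = k.factorial := by
    have h := Nat.choose_mul_factorial_mul_factorial hmk.le
    have h2 : (k - m).factorial = (k - m) * (k - 1 - m).factorial := by
      rw [show k - m = (k - 1 - m) + 1 by omega, Nat.factorial_succ]
    rw [← h, h2]; ring
  have h2 : (k.choose m : ZMod p) * ((m.factorial : ZMod p) *
      (((k - m : ℕ) : ZMod p) * ((k - 1 - m).factorial : ZMod p)))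
      = (k.factorial : ZMod p) := by
    have := congrArg (Nat.cast : ℕ → ZMod p) n1; push_cast at this; exact_mod_cast this
  have h3 : (m.factorial : ZMod p) * ((p - 1 - m).factorial : ZMod p) = (-1) ^ (m + 1) :=
    wilson_aux p m (by omega)
  have h4 : (k.factorial : ZMod p) * ((p - 1 - k).factorial : ZMod p) = (-1) ^ (k + 1) :=
    wilson_aux p k (by omega)
  have h5 : ((p - k).factorial : ZMod p) = ((p - k : ℕ) : ZMod p) *
      ((p - 1 - k).factorial : ZMod p) := by
    rw [show p - k = (p - 1 - k) + 1 by omega, Nat.factorial_succ]; push_cast; ring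
  have h6 : ((p - k : ℕ) : ZMod p) = -(k : ZMod p) := by
    have h7 : ((p - k : ℕ) : ZMod p) + (k : ZMod p) = 0 := by
      rw [← Nat.cast_add, show p - k + k = p by omega, ZMod.natCast_self]
    linear_combination h7
  have hs : ((-1 : ZMod p)) ^ ((k - 1 - m) + ((p - 1 - m) + (m + 1)))
      = (-1) ^ ((k + 1) + (m + 1)) := neg_one_pow_congr' (by omega)
  calc ((-1 : ZMod p) ^ (k - 1 - m) * (m.factorial : ZMod p) * ((k - 1 - m).factorial : ZMod p)) *
      ((-1) ^ (p - 1 - m) * ((m + k - p).factorial : ZMod p) *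
        ((p - 1 - m).factorial : ZMod p)) *
      ((k : ZMod p) * ((k - m : ℕ) : ZMod p) * (m.choose (p - k) : ZMod p) *
        (k.choose m : ZMod p)) * ((m.factorial : ZMod p) * ((p - k).factorial : ZMod p))
      = ((m.choose (p - k) : ZMod p) * ((p - k).factorial : ZMod p) *
          ((m + k - p).factorial : ZMod p)) *
        ((k.choose m : ZMod p) * ((m.factorial : ZMod p) *
          (((k - m : ℕ) : ZMod p) * ((k - 1 - m).factorial : ZMod p)))) *
        ((m.factorial : ZMod p) * ((p - 1 - m).factorial : ZMod p)) *
        ((-1) ^ (k - 1 - m) * (-1) ^ (p - 1 - m)) * (k : ZMod p) := by ring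
    _ = (m.factorial : ZMod p) * (k.factorial : ZMod p) * (-1) ^ (m + 1) *
        ((-1) ^ (k - 1 - m) * (-1) ^ (p - 1 - m)) * (k : ZMod p) := by rw [h1, h2, h3]
    _ = (-1 : ZMod p) ^ ((k - 1 - m) + ((p - 1 - m) + (m + 1))) *
        ((m.factorial : ZMod p) * (k.factorial : ZMod p) * (k : ZMod p)) := by
        rw [pow_add, pow_add]; ring
    _ = (-1 : ZMod p) ^ ((k + 1) + (m + 1)) *
        ((m.factorial : ZMod p) * (k.factorial : ZMod p) * (k : ZMod p)) := by rw [hs]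
    _ = (-1) ^ m * (k.factorial : ZMod p) ^ 2 *
        ((m.factorial : ZMod p) * ((p - k).factorial : ZMod p)) := by
        rw [h5, h6]
        linear_combination ((k.factorial : ZMod p) * (m.factorial : ZMod p) * (k : ZMod p) *
          (-1) ^ m) * h4

/-- Let `p` be an odd prime, `x` a `p`-adic integer with `m = ⟨x⟩_p ≤ (p-1)/2` and
`t = (x - m)/p ∈ ℤ_p`. Then for `p - m ≤ k ≤ p - 1`, the denominator
`k (k - m) C(m, p-k) C(k, m)` is a `p`-adic unit and
`C(x,k) C(x+k,k) ≡ (-1)^m p^2 t (t+1) / (k (k-m) C(m,p-k) C(k,m)) (mod p^3)`. -/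
theorem stmt2 (p : ℕ) [Fact p.Prime] (hp : Odd p) (x t : ℤ_[p]) (m : ℕ)
    (hm : m ≤ (p - 1) / 2) (hx : x = (m : ℤ_[p]) + p * t) (k : ℕ)
    (hk1 : p - m ≤ k) (hk2 : k ≤ p - 1) :
    ‖(k : ℚ_[p]) * ((k : ℚ_[p]) - (m : ℚ_[p])) * (m.choose (p - k) : ℚ_[p]) *
        (k.choose m : ℚ_[p])‖ = 1 ∧
    ‖qchoose (x : ℚ_[p]) k * qchoose ((x : ℚ_[p]) + (k : ℚ_[p])) k -
        (-1) ^ m * (p : ℚ_[p]) ^ 2 * (t : ℚ_[p]) * ((t : ℚ_[p]) + 1) /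
          ((k : ℚ_[p]) * ((k : ℚ_[p]) - (m : ℚ_[p])) * (m.choose (p - k) : ℚ_[p]) *
            (k.choose m : ℚ_[p]))‖
      ≤ (p : ℝ) ^ (-3 : ℤ) := by
  have hp2 : p.Prime := Fact.out
  have hple : 2 ≤ p := hp2.two_le
  obtain ⟨u, hu⟩ := hp
  have hpodd : Odd p := ⟨u, hu⟩
  have hm1 : 1 ≤ m := by omega
  have hmk : m < k := by omega
  have hkp : k < p := by omega
  have hsk : m + k - p < k := by omega
  -- norms of naturals prime to p
  have hnorm1 : ∀ n : ℕ, ¬ p ∣ n → ‖(n : ℚ_[p])‖ = 1 := by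
    intro n h
    have h1 : ‖((n : ℤ) : ℚ_[p])‖ ≤ 1 := Padic.norm_int_le_one _
    have h2 : ¬ ‖((n : ℤ) : ℚ_[p])‖ < 1 := by
      rw [Padic.norm_intCast_lt_one_iff]; exact_mod_cast h
    push_cast at h1 h2
    exact le_antisymm h1 (not_lt.mp h2)
  -- divisibility facts
  have n2 : m.choose (p - k) * (p - k).factorial * (m + k - p).factorial = m.factorial := by
    have h := Nat.choose_mul_factorial_mul_factorial (show p - k ≤ m by omega)
    rwa [show m - (p - k) = m + k - p by omega] at h
  have hd1 : ¬ p ∣ k := fun hd => by have := Nat.le_of_dvd (by omega) hd; omega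
  have hd2 : ¬ p ∣ (k - m) := fun hd => by have := Nat.le_of_dvd (by omega) hd; omega
  have hd3 : ¬ p ∣ m.choose (p - k) := by
    intro hd
    have hdd : m.choose (p - k) ∣ m.factorial :=
      ⟨(p - k).factorial * (m + k - p).factorial, by rw [← n2]; ring⟩
    have := (Nat.Prime.dvd_factorial hp2).mp (hd.trans hdd)
    omega
  have hd4 : ¬ p ∣ k.choose m := by
    intro hd
    have hdd : k.choose m ∣ k.factorial :=
      ⟨m.factorial * (k - m).factorial, by
        rw [← Nat.choose_mul_factorial_mul_factorial hmk.le]; ring⟩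
    have := (Nat.Prime.dvd_factorial hp2).mp (hd.trans hdd)
    omega
  have hdN : ¬ p ∣ (k * (k - m) * m.choose (p - k) * k.choose m) := by
    intro h
    rcases (Nat.Prime.dvd_mul hp2).mp h with h | h
    · rcases (Nat.Prime.dvd_mul hp2).mp h with h | h
      · rcases (Nat.Prime.dvd_mul hp2).mp h with h | h
        · exact hd1 h
        · exact hd2 h
      · exact hd3 h
    · exact hd4 h
  have hDq : (k : ℚ_[p]) * ((k : ℚ_[p]) - (m : ℚ_[p])) * (m.choose (p - k) : ℚ_[p]) *
      (k.choose m : ℚ_[p]) = ((k * (k - m) * m.choose (p - k) * k.choose m : ℕ) : ℚ_[p]) := by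
    push_cast [Nat.cast_sub hmk.le]
    ring
  have part1 : ‖(k : ℚ_[p]) * ((k : ℚ_[p]) - (m : ℚ_[p])) * (m.choose (p - k) : ℚ_[p]) *
      (k.choose m : ℚ_[p])‖ = 1 := by
    rw [hDq]; exact hnorm1 _ hdN
  refine ⟨part1, ?_⟩
  -- abbreviations
  set A : ℤ_[p] := ∏ i ∈ (Finset.range k).erase m, (x - (i : ℤ_[p])) with hA_def
  set B : ℤ_[p] := ∏ i ∈ (Finset.range k).erase (m + k - p), (x + (k : ℤ_[p]) - (i : ℤ_[p])) with hB_def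
  set D' : ℤ_[p] := (k : ℤ_[p]) * ((k : ℤ_[p]) - m) * (m.choose (p - k) : ℤ_[p]) *
    (k.choose m : ℤ_[p]) with hD_def
  set E : ℤ_[p] := A * B * D' - (-1) ^ m * ((k.factorial : ℤ_[p])) ^ 2 with hE_def
  have hA : (∏ i ∈ Finset.range k, (x - (i : ℤ_[p]))) = (p * t) * A := by
    rw [← Finset.mul_prod_erase _ _ (Finset.mem_range.mpr hmk)]
    congr 1
    rw [hx]; ring
  have hcastpk : (m : ℤ_[p]) + k = (p : ℤ_[p]) + ((m + k - p : ℕ) : ℤ_[p]) := by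
    have h : (m + k : ℕ) = (p + (m + k - p) : ℕ) := by omega
    exact_mod_cast congrArg (Nat.cast : ℕ → ℤ_[p]) h
  have hB : (∏ i ∈ Finset.range k, (x + (k : ℤ_[p]) - (i : ℤ_[p]))) = (p * (t + 1)) * B := by
    rw [← Finset.mul_prod_erase _ _ (Finset.mem_range.mpr hsk)]
    congr 1
    rw [hx]
    linear_combination hcastpk
  have hprod1 : ((∏ i ∈ Finset.range k, (x - (i : ℤ_[p])) : ℤ_[p]) : ℚ_[p])
      = ∏ i ∈ Finset.range k, ((x : ℚ_[p]) - (i : ℚ_[p])) := by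
    rw [show ((∏ i ∈ Finset.range k, (x - (i : ℤ_[p])) : ℤ_[p]) : ℚ_[p])
      = PadicInt.Coe.ringHom (∏ i ∈ Finset.range k, (x - (i : ℤ_[p]))) from rfl, map_prod]
    exact Finset.prod_congr rfl fun i _ => rfl
  have hprod2 : ((∏ i ∈ Finset.range k, (x + (k : ℤ_[p]) - (i : ℤ_[p])) : ℤ_[p]) : ℚ_[p])
      = ∏ i ∈ Finset.range k, ((x : ℚ_[p]) + (k : ℚ_[p]) - (i : ℚ_[p])) := by
    rw [show ((∏ i ∈ Finset.range k, (x + (k : ℤ_[p]) - (i : ℤ_[p])) : ℤ_[p]) : ℚ_[p])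
      = PadicInt.Coe.ringHom (∏ i ∈ Finset.range k, (x + (k : ℤ_[p]) - (i : ℤ_[p]))) from rfl, map_prod]
    exact Finset.prod_congr rfl fun i _ => rfl
  have e1 : qchoose (x : ℚ_[p]) k = (((p * t * A : ℤ_[p])) : ℚ_[p]) / (k.factorial : ℚ_[p]) := by
    simp only [qchoose]
    rw [← hprod1, hA]
  have e2 : qchoose ((x : ℚ_[p]) + (k : ℚ_[p])) k
      = (((p * (t + 1) * B : ℤ_[p])) : ℚ_[p]) / (k.factorial : ℚ_[p]) := by
    simp only [qchoose]
    rw [show (∏ i ∈ Finset.range k, ((x : ℚ_[p]) + (k : ℚ_[p]) - (i : ℚ_[p])))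
      = ((∏ i ∈ Finset.range k, (x + (k : ℤ_[p]) - (i : ℤ_[p])) : ℤ_[p]) : ℚ_[p]) from hprod2.symm, hB]
  have hfacne : (k.factorial : ℚ_[p]) ≠ 0 := by
    have h := hnorm1 k.factorial (by rw [Nat.Prime.dvd_factorial hp2]; omega)
    intro hc; rw [hc, norm_zero] at h; norm_num at h
  have hDne : (k : ℚ_[p]) * ((k : ℚ_[p]) - (m : ℚ_[p])) * (m.choose (p - k) : ℚ_[p]) *
      (k.choose m : ℚ_[p]) ≠ 0 := by
    intro hc; rw [hc, norm_zero] at part1; norm_num at part1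
  have hDcoe : ((D' : ℤ_[p]) : ℚ_[p]) = (k : ℚ_[p]) * ((k : ℚ_[p]) - (m : ℚ_[p])) *
      (m.choose (p - k) : ℚ_[p]) * (k.choose m : ℚ_[p]) := by
    rw [hD_def]; push_cast; ring
  have hEcoe : ((E : ℤ_[p]) : ℚ_[p]) = (A : ℚ_[p]) * (B : ℚ_[p]) *
      ((k : ℚ_[p]) * ((k : ℚ_[p]) - (m : ℚ_[p])) * (m.choose (p - k) : ℚ_[p]) *
        (k.choose m : ℚ_[p])) - (-1) ^ m * (k.factorial : ℚ_[p]) ^ 2 := by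
    rw [hE_def, ← hDcoe]; push_cast; ring
  have main_eq : qchoose (x : ℚ_[p]) k * qchoose ((x : ℚ_[p]) + (k : ℚ_[p])) k -
      (-1) ^ m * (p : ℚ_[p]) ^ 2 * (t : ℚ_[p]) * ((t : ℚ_[p]) + 1) /
        ((k : ℚ_[p]) * ((k : ℚ_[p]) - (m : ℚ_[p])) * (m.choose (p - k) : ℚ_[p]) *
          (k.choose m : ℚ_[p]))
      = ((p : ℚ_[p]) ^ 2 * (t : ℚ_[p]) * ((t : ℚ_[p]) + 1) * ((E : ℤ_[p]) : ℚ_[p])) /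
        ((k.factorial : ℚ_[p]) ^ 2 *
          ((k : ℚ_[p]) * ((k : ℚ_[p]) - (m : ℚ_[p])) * (m.choose (p - k) : ℚ_[p]) *
            (k.choose m : ℚ_[p]))) := by
    rw [e1, e2, hEcoe]
    push_cast
    generalize (k : ℚ_[p]) * ((k : ℚ_[p]) - (m : ℚ_[p])) * (m.choose (p - k) : ℚ_[p]) *
      (k.choose m : ℚ_[p]) = D at hDne ⊢
    field_simp
  -- toZMod computations
  have hxz : PadicInt.toZMod x = (m : ZMod p) := by
    rw [hx, map_add, map_mul, map_natCast, map_natCast, ZMod.natCast_self, zero_mul, add_zero]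
  have hAz : PadicInt.toZMod A = (-1) ^ (k - 1 - m) * (m.factorial : ZMod p) *
      ((k - 1 - m).factorial : ZMod p) := by
    have h1 : PadicInt.toZMod A = ∏ i ∈ (Finset.range k).erase m,
        ((m : ZMod p) - (i : ZMod p)) := by
      rw [hA_def, map_prod]
      exact Finset.prod_congr rfl fun i _ => by rw [map_sub, hxz, map_natCast]
    rw [h1]
    have h2 := congrArg (Int.cast : ℤ → ZMod p) (prod_erase_int m k hmk)
    push_cast at h2
    exact h2
  have hmb : (m : ZMod p) + (k : ZMod p) = ((m + k - p : ℕ) : ZMod p) := by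
    have h : ((m + k : ℕ) : ZMod p) = (((m + k - p) + p : ℕ) : ZMod p) := by
      rw [show (m + k - p) + p = m + k by omega]
    push_cast [ZMod.natCast_self] at h
    linear_combination h
  have hBz : PadicInt.toZMod B = (-1) ^ (p - 1 - m) * ((m + k - p).factorial : ZMod p) *
      ((p - 1 - m).factorial : ZMod p) := by
    have h1 : PadicInt.toZMod B = ∏ i ∈ (Finset.range k).erase (m + k - p),
        (((m + k - p : ℕ) : ZMod p) - (i : ZMod p)) := by
      rw [hB_def, map_prod]
      refine Finset.prod_congr rfl fun i _ => ?_
      rw [map_sub, map_add, hxz, map_natCast, map_natCast, hmb]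
    rw [h1]
    have h2 := congrArg (Int.cast : ℤ → ZMod p) (prod_erase_int (m + k - p) k hsk)
    push_cast at h2
    rw [h2, show k - 1 - (m + k - p) = p - 1 - m by omega]
  have hDz : PadicInt.toZMod D' = (k : ZMod p) * ((k - m : ℕ) : ZMod p) *
      (m.choose (p - k) : ZMod p) * (k.choose m : ZMod p) := by
    rw [hD_def, map_mul, map_mul, map_mul, map_sub, map_natCast, map_natCast, map_natCast,
      map_natCast, Nat.cast_sub hmk.le]
  have htoZ : PadicInt.toZMod E = 0 := by
    simp only [hE_def, map_sub, map_mul, map_pow, map_neg, map_one, map_natCast, hAz, hBz, hDz]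
    rw [sub_eq_zero]
    exact key_zmod p hpodd m k hm1 hmk hk2 hk1
  have hE3 : ‖E‖ ≤ (p : ℝ) ^ (-1 : ℤ) := by
    have h9 : E ∈ Ideal.span {(p : ℤ_[p]) ^ 1} := by
      rw [pow_one, ← PadicInt.maximalIdeal_eq_span_p, ← PadicInt.ker_toZMod,
        RingHom.mem_ker]
      exact htoZ
    have := (PadicInt.norm_le_pow_iff_mem_span_pow E 1).mpr h9
    simpa using this
  -- final norm computation
  have hfacnorm : ‖(k.factorial : ℚ_[p])‖ = 1 :=
    hnorm1 k.factorial (by rw [Nat.Prime.dvd_factorial hp2]; omega)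
  rw [main_eq, norm_div, norm_mul, norm_mul, norm_mul, norm_mul, norm_pow, norm_pow,
    Padic.norm_p, part1, PadicInt.padic_norm_e_of_padicInt,
    show ((t : ℚ_[p]) + 1) = (((t + 1 : ℤ_[p])) : ℚ_[p]) by push_cast; ring,
    PadicInt.padic_norm_e_of_padicInt, PadicInt.padic_norm_e_of_padicInt, hfacnorm]
  simp only [one_pow, mul_one, one_mul, div_one]
  have hp0 : (0 : ℝ) < p := by positivity
  have hb : ((p : ℝ))⁻¹ ^ 2 * 1 * 1 * (p : ℝ) ^ (-1 : ℤ) = (p : ℝ) ^ (-3 : ℤ) := by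
    rw [zpow_neg, zpow_neg, zpow_one, show (3 : ℤ) = ((3 : ℕ) : ℤ) from rfl, zpow_natCast]
    field_simp
  calc ((p : ℝ))⁻¹ ^ 2 * ‖t‖ * ‖t + 1‖ * ‖E‖
      ≤ ((p : ℝ))⁻¹ ^ 2 * 1 * 1 * (p : ℝ) ^ (-1 : ℤ) := by
        gcongr <;> first
          | exact PadicInt.norm_le_one _
          | exact hE3
    _ = (p : ℝ) ^ (-3 : ℤ) := hb
end

section
/- Let p be an odd prime and let x be a p-adic integer with m = ⟨x⟩_p < (p-1)/2, and set t = (x - m)/p ∈ ℤ_p. Then for every integer k with m + 1 ≤ k ≤ p - 1 - m, one has C(x,k)·C(x+k,k) ≡ (-1)^{m+k+1} · p·t · C(m+k,k) / ((k-m)·C(k,m)) · (1 + p·t·H_{m+k} - p·t·H_{k-m-1}) (mod p^3) in ℤ_p, where (k-m)·C(k,m) is a p-adic unit. -/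
open Finset

namespace Stmt3Aux

variable {p : ℕ} [Fact p.Prime]

lemma prodApprox (r : ℝ) (hr0 : 0 ≤ r) (hr1 : r ≤ 1) (s : Finset ℕ) (f : ℕ → ℚ_[p])
    (h : ∀ i ∈ s, ‖f i‖ ≤ r) :
    ‖∑ i ∈ s, f i‖ ≤ r ∧ ‖∏ i ∈ s, (1 + f i)‖ ≤ 1 ∧
      ‖∏ i ∈ s, (1 + f i) - (1 + ∑ i ∈ s, f i)‖ ≤ r * r := by
  induction s using Finset.induction_on with
  | empty => simp [hr0, mul_nonneg hr0 hr0]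
  | @insert a s' ha ih =>
    obtain ⟨hS, hP, hE⟩ := ih (fun i hi => h i (mem_insert_of_mem hi))
    have hfa : ‖f a‖ ≤ r := h a (mem_insert_self a s')
    have h1fa : ‖1 + f a‖ ≤ 1 :=
      le_trans (Padic.nonarchimedean _ _) (by simp; exact le_trans hfa hr1)
    rw [Finset.sum_insert ha, Finset.prod_insert ha]
    refine ⟨le_trans (Padic.nonarchimedean _ _) (by simp [hfa, hS]), ?_, ?_⟩
    · calc ‖(1 + f a) * ∏ i ∈ s', (1 + f i)‖ = ‖1 + f a‖ * ‖∏ i ∈ s', (1 + f i)‖ := norm_mul _ _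
      _ ≤ 1 * 1 := mul_le_mul h1fa hP (norm_nonneg _) zero_le_one
      _ = 1 := one_mul 1
    · have key : (1 + f a) * ∏ i ∈ s', (1 + f i) - (1 + (f a + ∑ i ∈ s', f i)) =
          (1 + f a) * (∏ i ∈ s', (1 + f i) - (1 + ∑ i ∈ s', f i)) + f a * ∑ i ∈ s', f i := by
        ring
      rw [key]
      refine le_trans (Padic.nonarchimedean _ _) (max_le ?_ ?_)
      · calc ‖(1 + f a) * (∏ i ∈ s', (1 + f i) - (1 + ∑ i ∈ s', f i))‖
            = ‖1 + f a‖ * ‖_‖ := norm_mul _ _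
          _ ≤ 1 * (r * r) := mul_le_mul h1fa hE (norm_nonneg _) zero_le_one
          _ = r * r := one_mul _
      · calc ‖f a * ∑ i ∈ s', f i‖ = ‖f a‖ * ‖∑ i ∈ s', f i‖ := norm_mul _ _
          _ ≤ r * r := mul_le_mul hfa hS (norm_nonneg _) hr0

lemma mulApprox (r : ℝ) (hr0 : 0 ≤ r) (hr1 : r ≤ 1) (A B a b : ℚ_[p])
    (hA : ‖A‖ ≤ 1) (ha : ‖a‖ ≤ r) (hb : ‖b‖ ≤ r)
    (hEA : ‖A - (1 + a)‖ ≤ r * r) (hEB : ‖B - (1 + b)‖ ≤ r * r) :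
    ‖A * B - (1 + (a + b))‖ ≤ r * r := by
  have h1b : ‖1 + b‖ ≤ 1 :=
    le_trans (Padic.nonarchimedean _ _) (by simp; exact le_trans hb hr1)
  have key : A * B - (1 + (a + b)) = A * (B - (1 + b)) + (A - (1 + a)) * (1 + b) + a * b := by
    ring
  rw [key]
  refine le_trans (Padic.nonarchimedean _ _)
    (max_le (le_trans (Padic.nonarchimedean _ _) (max_le ?_ ?_)) ?_)
  · calc ‖A * (B - (1 + b))‖ = ‖A‖ * ‖B - (1 + b)‖ := norm_mul _ _
      _ ≤ 1 * (r * r) := mul_le_mul hA hEB (norm_nonneg _) zero_le_one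
      _ = r * r := one_mul _
  · calc ‖(A - (1 + a)) * (1 + b)‖ = ‖A - (1 + a)‖ * ‖1 + b‖ := norm_mul _ _
      _ ≤ (r * r) * 1 := mul_le_mul hEA h1b (norm_nonneg _) (mul_nonneg hr0 hr0)
      _ = r * r := mul_one _
  · calc ‖a * b‖ = ‖a‖ * ‖b‖ := norm_mul _ _
      _ ≤ r * r := mul_le_mul ha hb (norm_nonneg _) hr0

lemma prodD (m k : ℕ) :
    (∏ i ∈ Finset.range k, ((m : ℚ_[p]) + (k : ℚ_[p]) - (i : ℚ_[p]))) * (m.factorial : ℚ_[p])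
      = ((m + k).factorial : ℚ_[p]) := by
  have h1 : ∀ i ∈ Finset.range k, ((m : ℚ_[p]) + k - i) = ((m + k - i : ℕ) : ℚ_[p]) := by
    intro i hi
    simp only [Finset.mem_range] at hi
    have h2 : i ≤ m + k := by omega
    push_cast [h2]; ring
  rw [Finset.prod_congr rfl h1, ← Nat.cast_prod, ← Nat.descFactorial_eq_prod_range,
    ← Nat.cast_mul, mul_comm]
  norm_cast
  have := Nat.factorial_mul_descFactorial (Nat.le_add_left k m)
  simpa using this

lemma prodRangeFact (n : ℕ) :
    (∏ i ∈ Finset.range n, ((i : ℚ_[p]) + 1)) = (n.factorial : ℚ_[p]) := by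
  induction n with
  | zero => simp
  | succ n ih => rw [Finset.prod_range_succ, ih, Nat.factorial_succ]; push_cast; ring

lemma prodC (m k : ℕ) (hkm : m < k) :
    (∏ i ∈ (Finset.range k).erase m, ((m : ℚ_[p]) - (i : ℚ_[p])))
      = (-1) ^ (k - m - 1) * (m.factorial : ℚ_[p]) * ((k - m - 1).factorial : ℚ_[p]) := by
  have hsplit : (Finset.range k).erase m = Finset.range m ∪ Finset.Ico (m + 1) k := by
    ext i
    simp only [Finset.mem_erase, Finset.mem_range, Finset.mem_union, Finset.mem_Ico]
    omega
  have hdisj : Disjoint (Finset.range m) (Finset.Ico (m + 1) k) := by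
    simp only [Finset.disjoint_left, Finset.mem_range, Finset.mem_Ico]
    omega
  rw [hsplit, Finset.prod_union hdisj]
  have e1 : (∏ i ∈ Finset.range m, ((m : ℚ_[p]) - i)) = (m.factorial : ℚ_[p]) := by
    have h1 : ∀ i ∈ Finset.range m, ((m : ℚ_[p]) - i) = ((m - i : ℕ) : ℚ_[p]) := by
      intro i hi
      simp only [Finset.mem_range] at hi
      push_cast [Nat.le_of_lt hi]; ring
    rw [Finset.prod_congr rfl h1, ← Nat.cast_prod, ← Nat.descFactorial_eq_prod_range,
      Nat.descFactorial_self]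
  have e2 : (∏ i ∈ Finset.Ico (m + 1) k, ((m : ℚ_[p]) - i))
      = (-1) ^ (k - m - 1) * ((k - m - 1).factorial : ℚ_[p]) := by
    rw [Finset.prod_Ico_eq_prod_range]
    have hc : k - (m + 1) = k - m - 1 := by omega
    rw [hc]
    have h1 : ∀ j ∈ Finset.range (k - m - 1),
        ((m : ℚ_[p]) - (m + 1 + j : ℕ)) = -((j : ℚ_[p]) + 1) := by
      intro j _; push_cast; ring
    have h2 : ∀ j ∈ Finset.range (k - m - 1),
        -((j : ℚ_[p]) + 1) = (-1) * ((j : ℚ_[p]) + 1) := by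
      intro j _; ring
    rw [Finset.prod_congr rfl h1, Finset.prod_congr rfl h2, Finset.prod_mul_distrib,
      Finset.prod_const, Finset.card_range, prodRangeFact]
  rw [e1, e2]; ring

lemma sumD (m k : ℕ) :
    (∑ i ∈ Finset.range k, ((m : ℚ_[p]) + (k : ℚ_[p]) - (i : ℚ_[p]))⁻¹)
      = (∑ i ∈ Finset.range (m + k), ((i : ℚ_[p]) + 1)⁻¹)
        - ∑ i ∈ Finset.range m, ((i : ℚ_[p]) + 1)⁻¹ := by
  rw [← Finset.sum_Ico_eq_sub _ (Nat.le_add_right m k), Finset.sum_Ico_eq_sum_range]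
  have hc : m + k - m = k := by omega
  rw [hc]
  rw [← Finset.sum_range_reflect (fun i => ((m : ℚ_[p]) + k - i)⁻¹) k]
  refine Finset.sum_congr rfl ?_
  intro j hj
  simp only [Finset.mem_range] at hj
  have h1 : ((k - 1 - j : ℕ) : ℚ_[p]) = (k : ℚ_[p]) - 1 - (j : ℚ_[p]) := by
    push_cast [show k - 1 - j = k - (1 + j) by omega, show 1 + j ≤ k by omega]
    ring
  rw [h1]
  congr 1
  push_cast
  ring

lemma sumC (m k : ℕ) (hkm : m < k) :
    (∑ i ∈ (Finset.range k).erase m, ((m : ℚ_[p]) - (i : ℚ_[p]))⁻¹)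
      = (∑ i ∈ Finset.range m, ((i : ℚ_[p]) + 1)⁻¹)
        - ∑ i ∈ Finset.range (k - m - 1), ((i : ℚ_[p]) + 1)⁻¹ := by
  have hsplit : (Finset.range k).erase m = Finset.range m ∪ Finset.Ico (m + 1) k := by
    ext i
    simp only [Finset.mem_erase, Finset.mem_range, Finset.mem_union, Finset.mem_Ico]
    omega
  have hdisj : Disjoint (Finset.range m) (Finset.Ico (m + 1) k) := by
    simp only [Finset.disjoint_left, Finset.mem_range, Finset.mem_Ico]
    omega
  rw [hsplit, Finset.sum_union hdisj]
  have e1 : (∑ i ∈ Finset.range m, ((m : ℚ_[p]) - i)⁻¹)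
      = ∑ i ∈ Finset.range m, ((i : ℚ_[p]) + 1)⁻¹ := by
    rw [← Finset.sum_range_reflect (fun i => ((m : ℚ_[p]) - i)⁻¹) m]
    refine Finset.sum_congr rfl ?_
    intro j hj
    simp only [Finset.mem_range] at hj
    have h1 : ((m - 1 - j : ℕ) : ℚ_[p]) = (m : ℚ_[p]) - 1 - (j : ℚ_[p]) := by
      push_cast [show m - 1 - j = m - (1 + j) by omega, show 1 + j ≤ m by omega]
      ring
    rw [h1]
    congr 1
    ring
  have e2 : (∑ i ∈ Finset.Ico (m + 1) k, ((m : ℚ_[p]) - i)⁻¹)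
      = -∑ i ∈ Finset.range (k - m - 1), ((i : ℚ_[p]) + 1)⁻¹ := by
    rw [Finset.sum_Ico_eq_sum_range, show k - (m + 1) = k - m - 1 by omega,
      ← Finset.sum_neg_distrib]
    refine Finset.sum_congr rfl ?_
    intro j _
    rw [← inv_neg]
    congr 1
    push_cast
    ring
  rw [e1, e2]; ring

lemma kIdent (A B km Cd Fm Fk Fkm Fkm1 ε Mk : ℚ_[p])
    (hA : A * (Fk * Fm) = Mk)
    (hB : B * (Fm * Fkm) = Fk)
    (hkmfac : Fkm = km * Fkm1)
    (hCd : Cd * Fm = Mk)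
    (hFm : Fm ≠ 0) (hFk : Fk ≠ 0) (hkm0 : km ≠ 0) (hFkm1 : Fkm1 ≠ 0)
    (s : ℚ_[p]) :
    s * ε * A / (km * B) = ε * (s * Fm * Fkm1) * Cd / (Fk * Fk) := by
  have hFkm : Fkm ≠ 0 := by rw [hkmfac]; exact mul_ne_zero hkm0 hFkm1
  have hA' : A = Mk / (Fk * Fm) := by rw [eq_div_iff (mul_ne_zero hFk hFm)]; exact hA
  have hB' : B = Fk / (Fm * Fkm) := by rw [eq_div_iff (mul_ne_zero hFm hFkm)]; exact hB
  have hCd' : Cd = Mk / Fm := by rw [eq_div_iff hFm]; exact hCd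
  rw [hA', hB', hCd', hkmfac]
  field_simp

end Stmt3Aux

set_option maxHeartbeats 2000000 in
open Stmt3Aux in
/-- Let `p` be an odd prime, `x` a `p`-adic integer with `m = ⟨x⟩_p < (p-1)/2` and
`t = (x - m)/p ∈ ℤ_p`. Then for `m + 1 ≤ k ≤ p - 1 - m`, `(k - m) C(k,m)` is a `p`-adic
unit and `C(x,k) C(x+k,k) ≡ (-1)^(m+k+1) p t C(m+k,k) / ((k-m) C(k,m)) ·
(1 + p t H_{m+k} - p t H_{k-m-1}) (mod p^3)`. -/
theorem stmt3 (p : ℕ) [Fact p.Prime] (hp : Odd p) (x t : ℤ_[p]) (m : ℕ)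
    (hm : m < (p - 1) / 2) (hx : x = (m : ℤ_[p]) + p * t) (k : ℕ)
    (hk1 : m + 1 ≤ k) (hk2 : k ≤ p - 1 - m) :
    ‖((k : ℚ_[p]) - (m : ℚ_[p])) * (k.choose m : ℚ_[p])‖ = 1 ∧
    ‖qchoose (x : ℚ_[p]) k * qchoose ((x : ℚ_[p]) + (k : ℚ_[p])) k -
        (-1) ^ (m + k + 1) * (p : ℚ_[p]) * (t : ℚ_[p]) * ((m + k).choose k : ℚ_[p]) /
            (((k : ℚ_[p]) - (m : ℚ_[p])) * (k.choose m : ℚ_[p])) *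
          (1 + (p : ℚ_[p]) * (t : ℚ_[p]) * hNum p (m + k)
            - (p : ℚ_[p]) * (t : ℚ_[p]) * hNum p (k - m - 1))‖
      ≤ (p : ℝ) ^ (-3 : ℤ) := by
  -- basic numeric facts
  have hpp : p.Prime := Fact.out
  have hp2 : 2 < p := by
    rcases hpp.eq_two_or_odd with h | h
    · exfalso; rw [h] at hp; exact (by decide : ¬ Odd 2) hp
    · have := hpp.two_le; omega
  have hkm : m < k := hk1
  have hmkp : m + k < p := by omega
  have hkp : k < p := by omega
  -- norms of small naturals / integers
  have unit : ∀ j : ℤ, j ≠ 0 → j.natAbs < p → ‖(j : ℚ_[p])‖ = 1 := by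
    intro j h0 hlt
    have h1 : ‖(j : ℚ_[p])‖ ≤ 1 := Padic.norm_int_le_one j
    rcases lt_or_eq_of_le h1 with h | h
    · exfalso
      have hd := (Padic.norm_intCast_lt_one_iff (k := j)).1 h
      have hd2 : (p : ℤ) ∣ (j.natAbs : ℤ) := Int.dvd_natAbs.2 hd
      have := Nat.le_of_dvd (by omega) (Int.natCast_dvd_natCast.1 hd2)
      omega
    · exact h
  have unitNat : ∀ n : ℕ, n ≠ 0 → n < p → ‖(n : ℚ_[p])‖ = 1 := by
    intro n h0 hlt
    have := unit (n : ℤ) (by exact_mod_cast h0) (by simpa using hlt)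
    simpa using this
  have factNorm : ∀ n : ℕ, n < p → ‖(n.factorial : ℚ_[p])‖ = 1 := by
    intro n hlt
    induction n with
    | zero => simp
    | succ n ih =>
      rw [Nat.factorial_succ, Nat.cast_mul, norm_mul, ih (by omega),
        unitNat (n + 1) (by omega) hlt, one_mul]
  -- part 1
  have hBfact : (k.choose m : ℚ_[p]) * ((m.factorial : ℚ_[p]) * ((k - m).factorial : ℚ_[p]))
      = (k.factorial : ℚ_[p]) := by
    have := Nat.choose_mul_factorial_mul_factorial (Nat.le_of_lt hkm)
    push_cast [← this]; ring
  have hmfn : ‖(m.factorial : ℚ_[p])‖ = 1 := factNorm m (by omega)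
  have hkmfn : ‖((k - m).factorial : ℚ_[p])‖ = 1 := factNorm (k - m) (by omega)
  have hkm1fn : ‖((k - m - 1).factorial : ℚ_[p])‖ = 1 := factNorm (k - m - 1) (by omega)
  have hkfn : ‖(k.factorial : ℚ_[p])‖ = 1 := factNorm k hkp
  have hmkfn : ‖((m + k).factorial : ℚ_[p])‖ = 1 := factNorm (m + k) hmkp
  have hBn : ‖(k.choose m : ℚ_[p])‖ = 1 := by
    have := congrArg (‖·‖) hBfact
    simp only [norm_mul, hmfn, hkmfn, hkfn, mul_one] at this
    simpa using this
  have hkmc : (k : ℚ_[p]) - (m : ℚ_[p]) = ((k - m : ℕ) : ℚ_[p]) :=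
    (Nat.cast_sub (Nat.le_of_lt hkm)).symm
  have goal1 : ‖((k : ℚ_[p]) - (m : ℚ_[p])) * (k.choose m : ℚ_[p])‖ = 1 := by
    rw [norm_mul, hkmc, unitNat (k - m) (by omega) (by omega), hBn, mul_one]
  refine ⟨goal1, ?_⟩
  -- notation
  set ε : ℚ_[p] := (p : ℚ_[p]) * (t : ℚ_[p]) with hεdef
  have hX : ((x : ℚ_[p])) = (m : ℚ_[p]) + ε := by rw [hx]; push_cast; ring
  have hεn : ‖ε‖ ≤ (p : ℝ)⁻¹ := by
    rw [hεdef, norm_mul, Padic.norm_p]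
    have ht : ‖(t : ℚ_[p])‖ ≤ 1 := by
      rw [PadicInt.padic_norm_e_of_padicInt]; exact PadicInt.norm_le_one t
    have : (0:ℝ) ≤ (p:ℝ)⁻¹ := by positivity
    nlinarith [norm_nonneg (t : ℚ_[p])]
  have hr0 : (0:ℝ) ≤ (p : ℝ)⁻¹ := by positivity
  have hr1 : (p : ℝ)⁻¹ ≤ 1 := by
    rw [inv_le_one_iff₀]
    right; exact_mod_cast Nat.one_le_iff_ne_zero.2 (by omega)
  -- norms of the linear factors
  have hcn : ∀ i ∈ (Finset.range k).erase m, ‖(m : ℚ_[p]) - (i : ℚ_[p])‖ = 1 := by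
    intro i hi
    rw [Finset.mem_erase, Finset.mem_range] at hi
    have h := unit ((m : ℤ) - (i : ℤ)) (by omega) (by omega)
    rw [Int.cast_sub, Int.cast_natCast, Int.cast_natCast] at h
    exact h
  have hdn : ∀ i ∈ Finset.range k, ‖(m : ℚ_[p]) + (k : ℚ_[p]) - (i : ℚ_[p])‖ = 1 := by
    intro i hi
    rw [Finset.mem_range] at hi
    have h := unit ((m : ℤ) + (k : ℤ) - (i : ℤ)) (by omega) (by omega)
    rw [Int.cast_sub, Int.cast_add, Int.cast_natCast, Int.cast_natCast, Int.cast_natCast] at h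
    exact h
  have hcne : ∀ i ∈ (Finset.range k).erase m, (m : ℚ_[p]) - (i : ℚ_[p]) ≠ 0 := by
    intro i hi h
    have := hcn i hi
    rw [h, norm_zero] at this
    norm_num at this
  have hdne : ∀ i ∈ Finset.range k, (m : ℚ_[p]) + (k : ℚ_[p]) - (i : ℚ_[p]) ≠ 0 := by
    intro i hi h
    have := hdn i hi
    rw [h, norm_zero] at this
    norm_num at this
  -- product decompositions
  have h1 : ∀ i ∈ Finset.range k, (x : ℚ_[p]) - (i : ℚ_[p])
      = ((m : ℚ_[p]) - (i : ℚ_[p])) + ε := by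
    intro i _; rw [hX]; ring
  have h1' : ∀ i ∈ (Finset.range k).erase m, ((m : ℚ_[p]) - (i : ℚ_[p])) + ε
      = ((m : ℚ_[p]) - (i : ℚ_[p])) * (1 + ε * ((m : ℚ_[p]) - (i : ℚ_[p]))⁻¹) := by
    intro i hi
    have hne := hcne i hi
    field_simp
  have h2 : ∀ i ∈ Finset.range k, (x : ℚ_[p]) + (k : ℚ_[p]) - (i : ℚ_[p])
      = ((m : ℚ_[p]) + (k : ℚ_[p]) - (i : ℚ_[p]))
        * (1 + ε * ((m : ℚ_[p]) + (k : ℚ_[p]) - (i : ℚ_[p]))⁻¹) := by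
    intro i hi
    have hne := hdne i hi
    rw [hX]
    field_simp
    ring
  have hsplit1 : (∏ i ∈ Finset.range k, ((x : ℚ_[p]) - (i : ℚ_[p])))
      = ε * ((∏ i ∈ (Finset.range k).erase m, ((m : ℚ_[p]) - (i : ℚ_[p])))
        * ∏ i ∈ (Finset.range k).erase m, (1 + ε * ((m : ℚ_[p]) - (i : ℚ_[p]))⁻¹)) := by
    rw [Finset.prod_congr rfl h1,
      ← Finset.mul_prod_erase _ _ (Finset.mem_range.2 hkm),
      Finset.prod_congr rfl h1', Finset.prod_mul_distrib]
    congr 1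
    simp
  have hsplit2 : (∏ i ∈ Finset.range k, ((x : ℚ_[p]) + (k : ℚ_[p]) - (i : ℚ_[p])))
      = (∏ i ∈ Finset.range k, ((m : ℚ_[p]) + (k : ℚ_[p]) - (i : ℚ_[p])))
        * ∏ i ∈ Finset.range k, (1 + ε * ((m : ℚ_[p]) + (k : ℚ_[p]) - (i : ℚ_[p]))⁻¹) := by
    rw [Finset.prod_congr rfl h2, Finset.prod_mul_distrib]
  -- abbreviations
  set Cm : ℚ_[p] := ∏ i ∈ (Finset.range k).erase m, ((m : ℚ_[p]) - (i : ℚ_[p])) with hCmdef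
  set U1 : ℚ_[p] := ∏ i ∈ (Finset.range k).erase m,
    (1 + ε * ((m : ℚ_[p]) - (i : ℚ_[p]))⁻¹) with hU1def
  set Cd : ℚ_[p] := ∏ i ∈ Finset.range k, ((m : ℚ_[p]) + (k : ℚ_[p]) - (i : ℚ_[p])) with hCddef
  set U2 : ℚ_[p] := ∏ i ∈ Finset.range k,
    (1 + ε * ((m : ℚ_[p]) + (k : ℚ_[p]) - (i : ℚ_[p]))⁻¹) with hU2def
  set S1 : ℚ_[p] := ∑ i ∈ (Finset.range k).erase m,
    ε * ((m : ℚ_[p]) - (i : ℚ_[p]))⁻¹ with hS1def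
  set S2 : ℚ_[p] := ∑ i ∈ Finset.range k,
    ε * ((m : ℚ_[p]) + (k : ℚ_[p]) - (i : ℚ_[p]))⁻¹ with hS2def
  -- values
  have hCmv : Cm = (-1) ^ (k - m - 1) * (m.factorial : ℚ_[p]) * ((k - m - 1).factorial : ℚ_[p]) :=
    prodC m k hkm
  have hCdv : Cd * (m.factorial : ℚ_[p]) = ((m + k).factorial : ℚ_[p]) := prodD m k
  have hCmn : ‖Cm‖ = 1 := by
    rw [hCmv, norm_mul, norm_mul, norm_pow, norm_neg, norm_one, one_pow, hmfn, hkm1fn]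
    ring
  have hCdn : ‖Cd‖ = 1 := by
    have := congrArg (‖·‖) hCdv
    simp only [norm_mul, hmfn, hmkfn, mul_one] at this
    simpa using this
  have hS1v : S1 = ε * (hNum p m - hNum p (k - m - 1)) := by
    rw [hS1def, ← Finset.mul_sum, sumC m k hkm]
    simp only [hNum]
  have hS2v : S2 = ε * (hNum p (m + k) - hNum p m) := by
    rw [hS2def, ← Finset.mul_sum, sumD m k]
    simp only [hNum]
  -- approximation bounds
  obtain ⟨hS1n, hU1n, hE1⟩ := prodApprox ((p:ℝ)⁻¹) hr0 hr1 ((Finset.range k).erase m)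
    (fun i => ε * ((m : ℚ_[p]) - (i : ℚ_[p]))⁻¹)
    (by
      intro i hi
      rw [norm_mul, norm_inv, hcn i hi, inv_one, mul_one]
      exact hεn)
  obtain ⟨hS2n, hU2n, hE2⟩ := prodApprox ((p:ℝ)⁻¹) hr0 hr1 (Finset.range k)
    (fun i => ε * ((m : ℚ_[p]) + (k : ℚ_[p]) - (i : ℚ_[p]))⁻¹)
    (by
      intro i hi
      rw [norm_mul, norm_inv, hdn i hi, inv_one, mul_one]
      exact hεn)
  have hU : ‖U1 * U2 - (1 + (S1 + S2))‖ ≤ (p:ℝ)⁻¹ * (p:ℝ)⁻¹ :=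
    mulApprox _ hr0 hr1 U1 U2 S1 S2 hU1n hS1n hS2n hE1 hE2
  -- the left-hand side
  have hkf0 : (k.factorial : ℚ_[p]) ≠ 0 := by
    intro h; rw [h, norm_zero] at hkfn; norm_num at hkfn
  have hmf0 : (m.factorial : ℚ_[p]) ≠ 0 := by
    intro h; rw [h, norm_zero] at hmfn; norm_num at hmfn
  have hkm1f0 : ((k - m - 1).factorial : ℚ_[p]) ≠ 0 := by
    intro h; rw [h, norm_zero] at hkm1fn; norm_num at hkm1fn
  have hkmd0 : (k : ℚ_[p]) - (m : ℚ_[p]) ≠ 0 := by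
    intro h
    rw [hkmc] at h
    have := unitNat (k - m) (by omega) (by omega)
    rw [h, norm_zero] at this; norm_num at this
  have hL : qchoose (x : ℚ_[p]) k * qchoose ((x : ℚ_[p]) + (k : ℚ_[p])) k
      = (ε * Cm * Cd / ((k.factorial : ℚ_[p]) * (k.factorial : ℚ_[p]))) * (U1 * U2) := by
    simp only [qchoose]
    rw [hsplit1, hsplit2]
    field_simp
  -- the right-hand side
  have hsign : ((-1 : ℚ_[p])) ^ (m + k + 1) = (-1) ^ (k - m - 1) := by
    rw [show m + k + 1 = (k - m - 1) + 2 * (m + 1) by omega, pow_add, pow_mul]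
    norm_num
  have hAfact : ((m + k).choose k : ℚ_[p])
      * ((k.factorial : ℚ_[p]) * (m.factorial : ℚ_[p])) = ((m + k).factorial : ℚ_[p]) := by
    have := Nat.choose_mul_factorial_mul_factorial (Nat.le_add_left k m)
    rw [Nat.add_sub_cancel] at this
    push_cast [← this]; ring
  have hkmfac : ((k - m).factorial : ℚ_[p])
      = ((k : ℚ_[p]) - (m : ℚ_[p])) * ((k - m - 1).factorial : ℚ_[p]) := by
    have h0 : 0 < k - m := by omega
    have := Nat.mul_factorial_pred h0.ne'
    rw [hkmc]
    rw [show k - m - 1 = (k - m) - 1 from rfl]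
    exact_mod_cast this.symm
  have hR : (-1 : ℚ_[p]) ^ (m + k + 1) * (p : ℚ_[p]) * (t : ℚ_[p]) * ((m + k).choose k : ℚ_[p]) /
        (((k : ℚ_[p]) - (m : ℚ_[p])) * (k.choose m : ℚ_[p]))
      = ε * Cm * Cd / ((k.factorial : ℚ_[p]) * (k.factorial : ℚ_[p])) := by
    rw [hsign]
    have hBne : (k.choose m : ℚ_[p]) ≠ 0 := by
      intro h; rw [h, norm_zero] at hBn; norm_num at hBn
    have := kIdent ((m + k).choose k : ℚ_[p]) (k.choose m : ℚ_[p])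
      ((k : ℚ_[p]) - (m : ℚ_[p])) Cd (m.factorial : ℚ_[p]) (k.factorial : ℚ_[p])
      ((k - m).factorial : ℚ_[p]) ((k - m - 1).factorial : ℚ_[p]) ε
      ((m + k).factorial : ℚ_[p]) hAfact hBfact hkmfac hCdv hmf0 hkf0 hkmd0 hkm1f0
      ((-1) ^ (k - m - 1))
    rw [show (-1 : ℚ_[p]) ^ (k - m - 1) * (p : ℚ_[p]) * (t : ℚ_[p]) = (-1) ^ (k - m - 1) * ε by
      rw [hεdef]; ring, this, hCmv]
  have hsum : 1 + (p : ℚ_[p]) * (t : ℚ_[p]) * hNum p (m + k)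
      - (p : ℚ_[p]) * (t : ℚ_[p]) * hNum p (k - m - 1) = 1 + (S1 + S2) := by
    rw [hS1v, hS2v, hεdef]
    ring
  -- final norm estimate
  have hKn : ‖ε * Cm * Cd / ((k.factorial : ℚ_[p]) * (k.factorial : ℚ_[p]))‖ ≤ (p:ℝ)⁻¹ := by
    rw [norm_div, norm_mul (ε * Cm) Cd, norm_mul ε Cm, hCmn, hCdn,
      norm_mul ((k.factorial : ℚ_[p])) ((k.factorial : ℚ_[p])), hkfn, mul_one, mul_one,
      mul_one, div_one]
    exact hεn
  have hfinal : qchoose (x : ℚ_[p]) k * qchoose ((x : ℚ_[p]) + (k : ℚ_[p])) k -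
      (-1) ^ (m + k + 1) * (p : ℚ_[p]) * (t : ℚ_[p]) * ((m + k).choose k : ℚ_[p]) /
          (((k : ℚ_[p]) - (m : ℚ_[p])) * (k.choose m : ℚ_[p])) *
        (1 + (p : ℚ_[p]) * (t : ℚ_[p]) * hNum p (m + k)
          - (p : ℚ_[p]) * (t : ℚ_[p]) * hNum p (k - m - 1))
      = (ε * Cm * Cd / ((k.factorial : ℚ_[p]) * (k.factorial : ℚ_[p])))
        * (U1 * U2 - (1 + (S1 + S2))) := by
    rw [hL, hR, hsum]
    ring
  rw [hfinal, norm_mul]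
  calc ‖ε * Cm * Cd / ((k.factorial : ℚ_[p]) * (k.factorial : ℚ_[p]))‖
        * ‖U1 * U2 - (1 + (S1 + S2))‖
      ≤ (p:ℝ)⁻¹ * ((p:ℝ)⁻¹ * (p:ℝ)⁻¹) :=
        mul_le_mul hKn hU (norm_nonneg _) hr0
    _ = (p : ℝ) ^ (-3 : ℤ) := by
        rw [show (-3 : ℤ) = -(3 : ℕ) by norm_num, zpow_neg, zpow_natCast]
        rw [pow_succ, pow_succ, pow_one, mul_inv, mul_inv]
        ring
end

section
/- For all nonnegative integers j and k, ∑_{n=0}^{j+k} ((-1)^n/(n+1)) · C(n,j) · C(j,n-k) = (-1)^{j+k} / ((j+k+1) · C(j+k,j)), as an identity of rational numbers. -/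
/-- Binomial coefficient `C(a,b)` for `a : ℕ` and an integer `b`, which vanishes
when `b < 0` or `b > a`. -/
def zchoose (a : ℕ) (b : ℤ) : ℕ := if 0 ≤ b then a.choose b.toNat else 0

open Finset

-- shift lemma: reduce order of alternating choose sum
lemma shift_sum (j : ℕ) (g : ℕ → ℚ) :
    ∑ m ∈ range (j+2), (-1:ℚ)^m * ((j+1).choose m) * g m
      = ∑ m ∈ range (j+1), (-1:ℚ)^m * (j.choose m) * (g m - g (m+1)) := by
  have h1 : ∑ m ∈ range (j+2), (-1:ℚ)^m * ((j+1).choose m) * g m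
      = (∑ i ∈ range (j+1), (-1:ℚ)^(i+1) * (((j+1).choose (i+1) : ℕ)) * g (i+1)) + g 0 := by
    rw [Finset.sum_range_succ' (fun m => (-1:ℚ)^m * ((j+1).choose m) * g m) (j+1)]
    simp
  have h2 : ∑ m ∈ range (j+2), (-1:ℚ)^m * (j.choose m) * g m
      = (∑ i ∈ range (j+1), (-1:ℚ)^(i+1) * ((j.choose (i+1) : ℕ)) * g (i+1)) + g 0 := by
    rw [Finset.sum_range_succ' (fun m => (-1:ℚ)^m * (j.choose m) * g m) (j+1)]
    simp
  have h3 : ∑ m ∈ range (j+2), (-1:ℚ)^m * (j.choose m) * g m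
      = ∑ m ∈ range (j+1), (-1:ℚ)^m * (j.choose m) * g m := by
    rw [Finset.sum_range_succ]
    simp [Nat.choose_succ_self]
  have expand : ∀ i ∈ range (j+1), (-1:ℚ)^(i+1) * (((j+1).choose (i+1) : ℕ)) * g (i+1)
      = (-1:ℚ)^(i+1) * ((j.choose (i+1) : ℕ)) * g (i+1)
        + (-((-1:ℚ)^i * (j.choose i) * g (i+1))) := by
    intro i _
    rw [Nat.choose_succ_succ]
    push_cast
    ring
  rw [h1, Finset.sum_congr rfl expand, Finset.sum_add_distrib]
  have h4 : ∑ m ∈ range (j+1), (-1:ℚ)^m * (j.choose m) * (g m - g (m+1))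
      = (∑ m ∈ range (j+1), (-1:ℚ)^m * (j.choose m) * g m)
        - ∑ m ∈ range (j+1), (-1:ℚ)^m * (j.choose m) * g (m+1) := by
    rw [← Finset.sum_sub_distrib]
    exact Finset.sum_congr rfl (fun m _ => by ring)
  rw [h4, Finset.sum_neg_distrib]
  have h5 : ∑ i ∈ range (j+1), (-1:ℚ)^(i+1) * ((j.choose (i+1) : ℕ)) * g (i+1)
      = (∑ m ∈ range (j+1), (-1:ℚ)^m * (j.choose m) * g m) - g 0 := by
    rw [← h3, h2]; ring
  rw [h5]; ring

lemma alt_vanish : ∀ i j k : ℕ, i < j →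
    ∑ m ∈ range (j+1), (-1:ℚ)^m * (j.choose m) * ((k+m).choose i) = 0 := by
  intro i
  induction i with
  | zero =>
    intro j k hj
    simp only [Nat.choose_zero_right, Nat.cast_one, mul_one]
    have h := Int.alternating_sum_range_choose_of_ne (by omega : j ≠ 0)
    have : ((∑ i ∈ range (j+1), (-1:ℤ)^i * j.choose i : ℤ) : ℚ) = 0 := by rw [h]; norm_num
    push_cast at this
    convert this using 2
  | succ i ih =>
    intro j k hj
    obtain ⟨j', rfl⟩ : ∃ j', j = j' + 1 := ⟨j - 1, by omega⟩
    rw [show j' + 1 + 1 = j' + 2 from rfl,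
      shift_sum j' (fun m => (((k+m).choose (i+1) : ℕ) : ℚ))]
    have step : ∀ m ∈ range (j'+1), (-1:ℚ)^m * (j'.choose m) *
        ((((k+m).choose (i+1) : ℕ) : ℚ) - (((k+(m+1)).choose (i+1) : ℕ) : ℚ))
        = -((-1:ℚ)^m * (j'.choose m) * ((k+m).choose i)) := by
      intro m _
      have e : k + (m+1) = (k+m) + 1 := by omega
      rw [e, Nat.choose_succ_succ]
      push_cast
      ring
    rw [Finset.sum_congr rfl step, Finset.sum_neg_distrib, ih j' k (by omega)]
    ring

lemma beta_sum : ∀ j k : ℕ, ∑ m ∈ range (j+1), (-1:ℚ)^m * (j.choose m) * (1/((k:ℚ)+m+1))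
    = ((j.factorial : ℚ) * (k.factorial : ℚ)) / (((j+k+1).factorial : ℕ) : ℚ) := by
  intro j
  induction j with
  | zero =>
    intro k
    rw [Finset.sum_range_one, show (0:ℕ)+k+1 = k+1 from by omega, Nat.factorial_succ]
    have h : ((k:ℚ)+1) ≠ 0 := by positivity
    have h2 : ((k.factorial : ℕ) : ℚ) ≠ 0 := by positivity
    push_cast
    field_simp
    simp
  | succ j ih =>
    intro k
    rw [show j + 1 + 1 = j + 2 from rfl, shift_sum j (fun m => 1/((k:ℚ)+m+1))]
    have step : ∀ m ∈ range (j+1), (-1:ℚ)^m * (j.choose m) *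
        ((1/((k:ℚ)+m+1)) - 1/((k:ℚ)+((m+1:ℕ):ℚ)+1))
        = (-1:ℚ)^m * (j.choose m) * (1/((k:ℚ)+m+1))
          - (-1:ℚ)^m * (j.choose m) * (1/(((k+1:ℕ):ℚ)+m+1)) := by
      intro m _
      push_cast
      ring
    rw [Finset.sum_congr rfl step, Finset.sum_sub_distrib, ih k, ih (k+1)]
    have e1 : (j + (k+1) + 1).factorial = (j+k+2) * (j+k+1).factorial := by
      rw [show j + (k+1) + 1 = (j+k+1)+1 from by omega, Nat.factorial_succ]
    have e2 : ((j+1) + k + 1).factorial = (j+k+2) * (j+k+1).factorial := by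
      rw [show (j+1) + k + 1 = (j+k+1)+1 from by omega, Nat.factorial_succ]
    have e3 : (j+1).factorial = (j+1) * j.factorial := Nat.factorial_succ j
    have e4 : (k+1).factorial = (k+1) * k.factorial := Nat.factorial_succ k
    rw [e1, e2, e3, e4]
    have h1 : (((j+k+1).factorial : ℕ) : ℚ) ≠ 0 := by positivity
    have h2 : ((j+k+2 : ℕ) : ℚ) ≠ 0 := by positivity
    push_cast
    field_simp
    ring

lemma choose_sub_alt (j x : ℕ) : ((x.choose j : ℕ) : ℚ) - (-1)^j
    = ∑ i ∈ range j, (-1:ℚ)^j * (-1)^(i+1) * (((x+1).choose (i+1) : ℕ) : ℚ) := by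
  induction j with
  | zero => simp
  | succ j ih =>
    rw [Finset.sum_range_succ]
    have e : ∀ i ∈ range j, (-1:ℚ)^(j+1) * (-1)^(i+1) * (((x+1).choose (i+1) : ℕ) : ℚ)
        = -((-1:ℚ)^j * (-1)^(i+1) * (((x+1).choose (i+1) : ℕ) : ℚ)) := by
      intro i _
      ring
    rw [Finset.sum_congr rfl e, Finset.sum_neg_distrib, ← ih,
      show ((-1:ℚ))^(j+1) * (-1)^(j+1) = 1 from by
        rw [← pow_add]; exact Even.neg_one_pow ⟨j+1, by ring⟩,
      one_mul, Nat.choose_succ_succ x j]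
    push_cast [Nat.succ_eq_add_one]
    ring

/-- For all nonnegative integers `j` and `k`,
`∑_{n=0}^{j+k} ((-1)^n/(n+1)) C(n,j) C(j,n-k) = (-1)^{j+k} / ((j+k+1) C(j+k,j))`. -/
theorem stmt4 (j k : ℕ) :
    ∑ n ∈ Finset.range (j + k + 1),
        ((-1 : ℚ) ^ n / ((n : ℚ) + 1)) * (n.choose j : ℚ) * (zchoose j ((n : ℤ) - k) : ℚ) =
      (-1 : ℚ) ^ (j + k) / (((j : ℚ) + k + 1) * ((j + k).choose j : ℚ)) := by
  set f : ℕ → ℚ := fun n =>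
    ((-1 : ℚ) ^ n / ((n : ℚ) + 1)) * (n.choose j : ℚ) * (zchoose j ((n : ℤ) - k) : ℚ) with hf
  have hsub : Finset.Ico k (j+k+1) ⊆ range (j+k+1) := by
    rw [Finset.range_eq_Ico]; exact Finset.Ico_subset_Ico (Nat.zero_le k) le_rfl
  have hzero : ∀ x ∈ range (j+k+1), x ∉ Finset.Ico k (j+k+1) → f x = 0 := by
    intro x hx hx2
    have hxk : x < k := by
      simp only [Finset.mem_range, Finset.mem_Ico, not_and, not_le] at hx hx2
      omega
    have hneg : ¬ (0 ≤ (x:ℤ) - k) := by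
      simp only [not_le]
      omega
    simp only [hf]
    rw [show zchoose j ((x:ℤ) - k) = 0 from by unfold zchoose; rw [if_neg hneg]]
    simp
  have hre : ∑ n ∈ range (j+k+1), f n = ∑ n ∈ Finset.Ico k (j+k+1), f n :=
    (Finset.sum_subset hsub hzero).symm
  rw [hre, Finset.sum_Ico_eq_sum_range, show j+k+1-k = j+1 from by omega]
  have key : ∀ i : ℕ, f (k+i)
      = (-1:ℚ)^k * (-1)^j * ((-1)^i * (j.choose i) * (1/((k:ℚ)+i+1)))
        + ∑ t ∈ range j, ((-1:ℚ)^k * (-1)^j * (-1)^(t+1) * (1/((t:ℚ)+1)))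
            * ((-1:ℚ)^i * (j.choose i) * (((k+i).choose t : ℕ):ℚ)) := by
    intro i
    have hK : ((k:ℚ)+i+1) ≠ 0 := by positivity
    have hz : (zchoose j (((k+i:ℕ):ℤ) - k) : ℚ) = (j.choose i : ℚ) := by
      have e : ((k+i:ℕ):ℤ) - k = (i:ℤ) := by push_cast; ring
      simp [zchoose, e]
    simp only [hf]
    rw [hz]
    have hc := choose_sub_alt j (k+i)
    have hdiv : ∀ t ∈ range j, (-1:ℚ)^j * (-1)^(t+1) * ((((k+i)+1).choose (t+1) : ℕ):ℚ)
        = (-1:ℚ)^j * (-1)^(t+1) * (((k:ℚ)+i+1) * (((k+i).choose t : ℕ):ℚ) / ((t:ℚ)+1)) := by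
      intro t _
      congr 1
      have h := Nat.add_one_mul_choose_eq (k+i) t
      have h' : (((k+i+1) * ((k+i).choose t) : ℕ):ℚ) = (((k+i+1).choose (t+1) * (t+1) : ℕ):ℚ) := by
        exact_mod_cast congrArg (fun n : ℕ => (n:ℚ)) h
      push_cast at h'
      rw [eq_div_iff (by positivity : ((t:ℚ)+1) ≠ 0)]
      linarith [h']
    rw [Finset.sum_congr rfl hdiv] at hc
    have hc' : (((k+i).choose j : ℕ):ℚ)
        = (-1:ℚ)^j + ∑ t ∈ range j, (-1:ℚ)^j * (-1)^(t+1)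
            * (((k:ℚ)+i+1) * (((k+i).choose t : ℕ):ℚ) / ((t:ℚ)+1)) := by
      linarith [hc]
    rw [hc', mul_add, add_mul, Finset.mul_sum, Finset.sum_mul]
    congr 1
    · push_cast
      field_simp
      ring
    · apply Finset.sum_congr rfl
      intro t ht
      have ht1 : ((t:ℚ)+1) ≠ 0 := by positivity
      push_cast
      field_simp
      ring
  rw [Finset.sum_congr rfl (fun i _ => key i), Finset.sum_add_distrib]
  have hA : ∑ i ∈ range (j+1),
      (-1:ℚ)^k * (-1)^j * ((-1)^i * (j.choose i) * (1/((k:ℚ)+i+1)))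
      = (-1:ℚ)^k * (-1)^j * ((j.factorial:ℚ) * (k.factorial:ℚ) / (((j+k+1).factorial : ℕ):ℚ)) := by
    rw [← Finset.mul_sum, beta_sum j k]
  have hB : ∑ i ∈ range (j+1), ∑ t ∈ range j,
      ((-1:ℚ)^k * (-1)^j * (-1)^(t+1) * (1/((t:ℚ)+1)))
        * ((-1:ℚ)^i * (j.choose i) * (((k+i).choose t : ℕ):ℚ)) = 0 := by
    rw [Finset.sum_comm]
    apply Finset.sum_eq_zero
    intro t ht
    rw [← Finset.mul_sum, alt_vanish t j k (Finset.mem_range.mp ht), mul_zero]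
  rw [hA, hB, add_zero]
  have hcf : ((j+k).choose j) * j.factorial * k.factorial = (j+k).factorial := by
    have h := Nat.choose_mul_factorial_mul_factorial (Nat.le_add_right j k)
    simpa [show j + k - j = k from by omega] using h
  have hcf' : (((j+k).choose j : ℕ) : ℚ) * (j.factorial:ℚ) * (k.factorial:ℚ)
      = (((j+k).factorial : ℕ):ℚ) := by exact_mod_cast congrArg (fun n : ℕ => (n:ℚ)) hcf
  have hfs : ((((j+k+1).factorial : ℕ)):ℚ) = ((j:ℚ)+k+1) * (((j+k).factorial : ℕ):ℚ) := by
    rw [Nat.factorial_succ]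
    push_cast
    ring
  have h1 : (((j+k).factorial : ℕ) : ℚ) ≠ 0 := by positivity
  have h2 : (((j+k).choose j : ℕ) : ℚ) ≠ 0 := by
    have : 0 < (j+k).choose j := Nat.choose_pos (Nat.le_add_right j k)
    positivity
  have h3 : ((j:ℚ)+k+1) ≠ 0 := by positivity
  rw [hfs]
  field_simp
  linear_combination ((-1:ℚ)^k * (-1:ℚ)^j) * hcf'
end

section
/- For all nonnegative integers M and k, ∑_{j=0}^{M} (-1)^j · C(M,j) · C(M+j,j) / ((j+k+1) · C(j+k,j)) = C(k,M) / ((k+1) · C(M+k+1,M)), as an identity of rational numbers. (Here C(k,M) = 0 when k < M.) -/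
open Finset

lemma negChoose (j : ℕ) : ∀ n : ℕ, Ring.choose (-(n : ℚ) - 1) j
    = (-1) ^ j * ((n + j).choose j : ℚ) := by
  induction j with
  | zero => intro n; simp [Ring.choose_zero_right]
  | succ j ih =>
    intro n
    induction n with
    | zero =>
      have h := Ring.choose_succ_succ (-1 : ℚ) j
      have h0 : ((-1 : ℚ) + 1) = 0 := by ring
      rw [h0, Ring.choose_zero_succ] at h
      have h5 : (-((0:ℕ) : ℚ) - 1) = -1 := by push_cast; ring
      rw [h5]
      have h1 : Ring.choose (-1 : ℚ) j = (-1)^j * ((0 + j).choose j : ℚ) := by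
        have := ih 0
        rw [h5] at this; exact this
      rw [h1] at h
      have : Ring.choose (-1 : ℚ) (j + 1) = -((-1)^j * ((0 + j).choose j : ℚ)) := by linarith
      rw [this]
      simp [pow_succ]
    | succ n ihn =>
      have h := Ring.choose_succ_succ (-(n : ℚ) - 2) j
      have h0 : (-(n : ℚ) - 2 + 1) = -(n : ℚ) - 1 := by ring
      rw [h0] at h
      have h2 : (-(↑(n+1) : ℚ) - 1) = -(n : ℚ) - 2 := by push_cast; ring
      rw [h2]
      have h3 : Ring.choose (-(n:ℚ)-2) j = (-1)^j * ((n + 1 + j).choose j : ℚ) := by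
        have := ih (n+1); rw [h2] at this; exact this
      have hrec : Ring.choose (-(n : ℚ) - 2) (j + 1)
          = Ring.choose (-(n:ℚ) - 1) (j+1) - ((-1)^j * ((n + 1 + j).choose j : ℚ)) := by
        rw [← h3]; linarith
      rw [hrec, ihn]
      have h4 : (n + 1 + (j+1)).choose (j+1) = (n+j+1).choose j + (n+j+1).choose (j+1) := by
        have e : n + 1 + (j + 1) = (n + j + 1) + 1 := by ring
        rw [e, Nat.choose_succ_succ]
      rw [h4]
      have e2 : n + (j+1) = n + j + 1 := rfl
      have e3 : n + 1 + j = n + j + 1 := by ring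
      rw [e2, e3]
      push_cast
      ring

lemma vandermonde (M k : ℕ) :
    ∑ j ∈ Finset.range (M + 1),
      (-1 : ℚ) ^ j * ((M + j).choose j : ℚ) * (((M + k + 1).choose (M - j) : ℚ))
    = (k.choose M : ℚ) := by
  have h := Ring.add_choose_eq (R := ℚ) (r := -(M : ℚ) - 1) (s := (M : ℚ) + k + 1) M
    (Commute.all _ _)
  have hrs : (-(M : ℚ) - 1) + ((M : ℚ) + k + 1) = (k : ℚ) := by ring
  rw [hrs, Ring.choose_natCast] at h
  rw [Finset.Nat.sum_antidiagonal_eq_sum_range_succ_mk] at h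
  rw [h]
  apply Finset.sum_congr rfl
  intro j hj
  have hc : ((M : ℚ) + k + 1) = ((M + k + 1 : ℕ) : ℚ) := by push_cast; ring
  show (-1 : ℚ) ^ j * ((M + j).choose j : ℚ) * (((M + k + 1).choose (M - j) : ℚ))
      = Ring.choose (-(M : ℚ) - 1) j * Ring.choose ((M : ℚ) + k + 1) (M - j)
  rw [negChoose j M, hc, Ring.choose_natCast]

lemma term_eq (M k j : ℕ) (hj : j ≤ M) :
    (-1 : ℚ) ^ j * (M.choose j : ℚ) * ((M + j).choose j : ℚ) /
          (((j : ℚ) + k + 1) * ((j + k).choose j : ℚ))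
    = (-1 : ℚ) ^ j * ((M + j).choose j : ℚ) * (((M + k + 1).choose (M - j) : ℚ)) /
          (((k : ℚ) + 1) * ((M + k + 1).choose M : ℚ)) := by
  have key : (M.choose j : ℚ) * (((k : ℚ) + 1) * ((M + k + 1).choose M : ℚ))
      = ((M + k + 1).choose (M - j) : ℚ) * (((j : ℚ) + k + 1) * ((j + k).choose j : ℚ)) := by
    rw [Nat.cast_choose ℚ hj, Nat.cast_choose ℚ (by omega : M ≤ M + k + 1),
      Nat.cast_choose ℚ (by omega : M - j ≤ M + k + 1),
      Nat.cast_choose ℚ (by omega : j ≤ j + k)]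
    have e1 : M + k + 1 - M = k + 1 := by omega
    have e2 : M + k + 1 - (M - j) = j + k + 1 := by omega
    have e3 : j + k - j = k := by omega
    rw [e1, e2, e3]
    have f1 : ((k+1).factorial : ℚ) = (k+1) * k.factorial := by
      rw [Nat.factorial_succ]; push_cast; ring
    have f2 : ((j+k+1).factorial : ℚ) = ((j:ℚ)+k+1) * (j+k).factorial := by
      rw [Nat.factorial_succ]; push_cast; ring
    rw [f1, f2]
    have hM : (M.factorial : ℚ) ≠ 0 := by exact_mod_cast (Nat.factorial_pos M).ne'
    have hj' : (j.factorial : ℚ) ≠ 0 := by exact_mod_cast (Nat.factorial_pos j).ne'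
    have hMj : ((M-j).factorial : ℚ) ≠ 0 := by exact_mod_cast (Nat.factorial_pos (M-j)).ne'
    have hk : (k.factorial : ℚ) ≠ 0 := by exact_mod_cast (Nat.factorial_pos k).ne'
    have hjk : ((j+k).factorial : ℚ) ≠ 0 := by exact_mod_cast (Nat.factorial_pos (j+k)).ne'
    have hk1 : ((k:ℚ)+1) ≠ 0 := by positivity
    have hjk1 : ((j:ℚ)+k+1) ≠ 0 := by positivity
    field_simp
  have d1 : (((j : ℚ) + k + 1) * ((j + k).choose j : ℚ)) ≠ 0 := by
    apply mul_ne_zero (by positivity)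
    exact_mod_cast (Nat.choose_pos (by omega : j ≤ j + k)).ne'
  have d2 : (((k : ℚ) + 1) * ((M + k + 1).choose M : ℚ)) ≠ 0 := by
    apply mul_ne_zero (by positivity)
    exact_mod_cast (Nat.choose_pos (by omega : M ≤ M + k + 1)).ne'
  rw [div_eq_div_iff d1 d2]
  linear_combination ((-1:ℚ)^j * (((M + j).choose j : ℕ) : ℚ)) * key

/-- For all nonnegative integers `M` and `k`,
`∑_{j=0}^{M} (-1)^j C(M,j) C(M+j,j) / ((j+k+1) C(j+k,j)) = C(k,M) / ((k+1) C(M+k+1,M))`. -/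
theorem stmt5 (M k : ℕ) :
    ∑ j ∈ Finset.range (M + 1),
        (-1 : ℚ) ^ j * (M.choose j : ℚ) * ((M + j).choose j : ℚ) /
          (((j : ℚ) + k + 1) * ((j + k).choose j : ℚ)) =
      (k.choose M : ℚ) / (((k : ℚ) + 1) * ((M + k + 1).choose M : ℚ)) := by
  rw [Finset.sum_congr rfl (fun j hj => term_eq M k j
    (Nat.lt_succ_iff.mp (Finset.mem_range.mp hj)))]
  rw [← Finset.sum_div, vandermonde]
end

section
/- Let p be an odd prime. For all integers j, k with 0 ≤ j, k ≤ p - 1, one has the exact identity of rational numbers ∑_{n=0}^{p-1} C(n,j)·C(n,k) = p · ∑_{n=0}^{j+k} (1/(n+1))·C(n,j)·C(j,n-k)·C(p-1,n). -/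
lemma zchoose_eq (a k m : ℕ) :
    zchoose a ((m : ℤ) - k) = if k ≤ m then a.choose (m - k) else 0 := by
  unfold zchoose
  by_cases h : k ≤ m
  · rw [if_pos (by omega : (0:ℤ) ≤ (m:ℤ) - k), if_pos h]
    congr 1
    omega
  · rw [if_neg (by omega : ¬ (0:ℤ) ≤ (m:ℤ) - k), if_neg h]

/-- Subset-of-subset identity without the upper-bound hypothesis. -/
lemma choose_mul' (n k s : ℕ) (hsk : s ≤ k) :
    n.choose k * k.choose s = n.choose s * (n - s).choose (k - s) := by
  by_cases hkn : k ≤ n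
  · exact Nat.choose_mul hsk
  · rw [Nat.choose_eq_zero_of_lt (by omega), Nat.zero_mul]
    by_cases hsn : s ≤ n
    · rw [show (n - s).choose (k - s) = 0 from Nat.choose_eq_zero_of_lt (by omega),
        Nat.mul_zero]
    · rw [show n.choose s = 0 from Nat.choose_eq_zero_of_lt (by omega), Nat.zero_mul]

/-- Hockey stick identity. -/
lemma hockey (p m : ℕ) : ∑ n ∈ Finset.range p, n.choose m = p.choose (m + 1) := by
  induction p with
  | zero => simp
  | succ p ih =>
      rw [Finset.sum_range_succ, ih, Nat.choose_succ_succ, Nat.add_comm]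

/-- Vandermonde in range form. -/
lemma vander (a b c : ℕ) :
    ∑ t ∈ Finset.range (c + 1), a.choose t * b.choose (c - t) = (a + b).choose c := by
  rw [Nat.add_choose_eq, Finset.Nat.sum_antidiagonal_eq_sum_range_succ_mk]

/-- The key expansion of a product of binomial coefficients. -/
lemma key (n j k : ℕ) :
    n.choose j * n.choose k =
      ∑ m ∈ Finset.range (j + k + 1),
        m.choose j * zchoose j ((m : ℤ) - k) * n.choose m := by
  by_cases hnj : j ≤ n
  · -- reindex m = j + t, t ∈ range (k+1)
    have hsum : ∑ m ∈ Finset.range (j + k + 1),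
        m.choose j * zchoose j ((m : ℤ) - k) * n.choose m =
        ∑ t ∈ Finset.range (k + 1),
          (j + t).choose j * zchoose j (((j + t : ℕ) : ℤ) - k) * n.choose (j + t) := by
      rw [show j + k + 1 = j + (k + 1) by ring, Finset.sum_range_add]
      have : ∀ m ∈ Finset.range j,
          m.choose j * zchoose j ((m : ℤ) - k) * n.choose m = 0 := by
        intro m hm
        rw [Finset.mem_range] at hm
        rw [Nat.choose_eq_zero_of_lt hm, Nat.zero_mul, Nat.zero_mul]
      rw [Finset.sum_eq_zero this, Nat.zero_add]
    rw [hsum]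
    have step : ∀ t ∈ Finset.range (k + 1),
        (j + t).choose j * zchoose j (((j + t : ℕ) : ℤ) - k) * n.choose (j + t) =
          n.choose j * ((n - j).choose t * j.choose (k - t)) := by
      intro t ht
      rw [Finset.mem_range] at ht
      have h1 : n.choose (j + t) * (j + t).choose j =
          n.choose j * (n - j).choose t := by
        have := choose_mul' n (j + t) j (Nat.le_add_right _ _)
        simpa using this
      have h2 : zchoose j (((j + t : ℕ) : ℤ) - k) = j.choose (k - t) := by
        rw [zchoose_eq]
        by_cases h : k ≤ j + t
        · rw [if_pos h]
          have : j + t - k = j - (k - t) := by omega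
          rw [this]
          by_cases hkt : k - t ≤ j
          · exact Nat.choose_symm hkt
          · omega
        · rw [if_neg h]
          rw [Nat.choose_eq_zero_of_lt (by omega)]
      rw [h2]
      calc (j + t).choose j * j.choose (k - t) * n.choose (j + t)
          = n.choose (j + t) * (j + t).choose j * j.choose (k - t) := by ring
        _ = n.choose j * (n - j).choose t * j.choose (k - t) := by rw [h1]
        _ = n.choose j * ((n - j).choose t * j.choose (k - t)) := by ring
    rw [Finset.sum_congr rfl step, ← Finset.mul_sum, vander]
    congr 1
    rw [Nat.sub_add_cancel hnj]
  · -- n < j : both sides are zero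
    push_neg at hnj
    rw [Nat.choose_eq_zero_of_lt hnj, Nat.zero_mul]
    symm
    apply Finset.sum_eq_zero
    intro m _
    by_cases hmj : j ≤ m
    · rw [Nat.choose_eq_zero_of_lt (by omega : n < m), Nat.mul_zero]
    · rw [Nat.choose_eq_zero_of_lt (by omega : m < j), Nat.zero_mul, Nat.zero_mul]

/-- Let `p` be an odd prime. For all `0 ≤ j, k ≤ p - 1`, one has the identity of rationals
`∑_{n=0}^{p-1} C(n,j) C(n,k) = p ∑_{n=0}^{j+k} (1/(n+1)) C(n,j) C(j,n-k) C(p-1,n)`. -/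
theorem stmt11 (p : ℕ) (hp : p.Prime) (hodd : Odd p) (j k : ℕ)
    (hj : j ≤ p - 1) (hk : k ≤ p - 1) :
    ∑ n ∈ Finset.range p, (n.choose j : ℚ) * (n.choose k : ℚ) =
      (p : ℚ) * ∑ n ∈ Finset.range (j + k + 1),
        (1 / ((n : ℚ) + 1)) * (n.choose j : ℚ) * (zchoose j ((n : ℤ) - k) : ℚ) *
          ((p - 1).choose n : ℚ) := by
  have hp1 : p - 1 + 1 = p := Nat.succ_pred_eq_of_pos hp.pos
  have lhs_eq : ∑ n ∈ Finset.range p, (n.choose j : ℚ) * (n.choose k : ℚ) =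
      ∑ m ∈ Finset.range (j + k + 1),
        (m.choose j : ℚ) * (zchoose j ((m : ℤ) - k) : ℚ) * (p.choose (m + 1) : ℚ) := by
    have : ∀ n : ℕ, (n.choose j : ℚ) * (n.choose k : ℚ) =
        ∑ m ∈ Finset.range (j + k + 1),
          (m.choose j : ℚ) * (zchoose j ((m : ℤ) - k) : ℚ) * (n.choose m : ℚ) := by
      intro n
      have := key n j k
      have := congrArg (fun x : ℕ => (x : ℚ)) this
      push_cast at this
      convert this using 2
    rw [Finset.sum_congr rfl (fun n _ => this n), Finset.sum_comm]
    apply Finset.sum_congr rfl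
    intro m _
    rw [← Finset.mul_sum, ← Nat.cast_sum, hockey]
  rw [lhs_eq, Finset.mul_sum]
  apply Finset.sum_congr rfl
  intro m _
  have hkey : (p : ℚ) * ((p - 1).choose m : ℚ) = ((m : ℚ) + 1) * (p.choose (m + 1) : ℚ) := by
    have := Nat.add_one_mul_choose_eq (p - 1) m
    rw [hp1] at this
    have := congrArg (fun x : ℕ => (x : ℚ)) this
    push_cast at this
    linarith [this]
  have hm1 : ((m : ℚ) + 1) ≠ 0 := by positivity
  field_simp
  linear_combination (-1 : ℚ) * ((m.choose j : ℚ) * (zchoose j ((m : ℤ) - k) : ℚ)) * hkey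
end

section
/- Let p be an odd prime. For every integer n with 0 ≤ n ≤ p - 1, one has C(p-1,n) ≡ (-1)^n · (1 - p·H_n) (mod p^2), as a congruence in ℤ_p (equivalently, in the ring of rationals with denominator prime to p). -/
lemma norm_nat_le_one' (p : ℕ) [Fact p.Prime] (k : ℕ) : ‖(k : ℚ_[p])‖ ≤ 1 := by
  have := Padic.norm_int_le_one (p := p) (k : ℤ)
  push_cast at this
  exact this

lemma norm_nat_unit (p : ℕ) [Fact p.Prime] (k : ℕ) (h0 : 0 < k) (hk : k < p) :
    ‖(k : ℚ_[p])‖ = 1 := by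
  have h1 : ‖(k : ℚ_[p])‖ ≤ 1 := norm_nat_le_one' p k
  have h2 : ¬ ‖((k : ℤ) : ℚ_[p])‖ < 1 := by
    rw [Padic.norm_intCast_lt_one_iff]
    intro h
    have := Int.le_of_dvd (by exact_mod_cast h0) h
    omega
  push_cast at h2
  linarith [lt_or_eq_of_le h1]

lemma hNum_norm_le (p : ℕ) [Fact p.Prime] (n : ℕ) (hn : n ≤ p - 1) :
    ‖hNum p n‖ ≤ 1 := by
  apply IsUltrametricDist.norm_sum_le_of_forall_le_of_nonneg zero_le_one
  intro i hi
  rw [Finset.mem_range] at hi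
  have hp2 : 2 ≤ p := (Fact.out : p.Prime).two_le
  have : ((i : ℚ_[p]) + 1) = ((i + 1 : ℕ) : ℚ_[p]) := by push_cast; ring
  rw [this, norm_inv, norm_nat_unit p (i+1) (Nat.succ_pos i) (by omega)]
  norm_num

/-- Let `p` be an odd prime. For every `0 ≤ n ≤ p - 1`, one has
`C(p-1,n) ≡ (-1)^n (1 - p H_n) (mod p^2)` in `ℤ_p`. -/
theorem stmt12 (p : ℕ) [Fact p.Prime] (hp : Odd p) (n : ℕ) (hn : n ≤ p - 1) :
    ‖((p - 1).choose n : ℚ_[p]) - (-1) ^ n * (1 - (p : ℚ_[p]) * hNum p n)‖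
      ≤ (p : ℝ) ^ (-2 : ℤ) := by
  have hp2 : 2 ≤ p := (Fact.out : p.Prime).two_le
  have hppos : (0 : ℝ) < p := by positivity
  induction n with
  | zero =>
    simp [hNum]
  | succ n ih =>
    have hn' : n ≤ p - 1 := by omega
    have ih := ih hn'
    have hnp : n + 1 < p := by omega
    have hdnorm : ‖(n : ℚ_[p]) + 1‖ = 1 := by
      have := norm_nat_unit p (n + 1) (Nat.succ_pos n) hnp
      push_cast at this
      exact this
    have hden : ((n : ℚ_[p]) + 1) ≠ 0 := by
      intro h; rw [h] at hdnorm; simp at hdnorm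
    have hchoose : ((p - 1).choose (n + 1) : ℚ_[p]) * ((n : ℚ_[p]) + 1)
        = ((p - 1).choose n : ℚ_[p]) * ((p - 1 - n : ℕ) : ℚ_[p]) := by
      have := Nat.choose_succ_right_eq (p - 1) n
      exact_mod_cast congrArg (fun x : ℕ => (x : ℚ_[p])) this
    have hH : hNum p (n + 1) = hNum p n + ((n : ℚ_[p]) + 1)⁻¹ :=
      Finset.sum_range_succ _ n
    set A := ((p - 1).choose n : ℚ_[p]) with hA
    set B := ((-1 : ℚ_[p]) ^ n * (1 - (p : ℚ_[p]) * hNum p n)) with hB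
    set c := ((p - 1 - n : ℕ) : ℚ_[p]) / ((n : ℚ_[p]) + 1) with hc
    have hsub : ((p - 1 - n : ℕ) : ℚ_[p]) = (p : ℚ_[p]) - 1 - n := by
      have h : p - 1 - n + (1 + n) = p := by omega
      have h2 := congrArg (fun x : ℕ => (x : ℚ_[p])) h
      push_cast at h2
      linear_combination h2
    have key : ((p - 1).choose (n + 1) : ℚ_[p])
          - (-1) ^ (n + 1) * (1 - (p : ℚ_[p]) * hNum p (n + 1))
        = c * (A - B)
          + (-1) ^ (n + 1) * (p : ℚ_[p]) ^ 2 * hNum p n / ((n : ℚ_[p]) + 1) := by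
      have h1 : ((p - 1).choose (n + 1) : ℚ_[p]) = A * c := by
        rw [hc, hA]
        field_simp
        linear_combination hchoose
      rw [h1, hH, hB, hc, hsub]
      field_simp
      ring
    rw [key]
    refine (IsUltrametricDist.norm_add_le_max _ _).trans (max_le ?_ ?_)
    · rw [norm_mul]
      have hcle : ‖c‖ ≤ 1 := by
        rw [hc, norm_div, hdnorm, div_one]
        exact norm_nat_le_one' p _
      calc ‖c‖ * ‖A - B‖ ≤ 1 * ((p : ℝ) ^ (-2 : ℤ)) := by
            apply mul_le_mul hcle ih (norm_nonneg _) zero_le_one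
        _ = (p : ℝ) ^ (-2 : ℤ) := one_mul _
    · rw [norm_div, norm_mul, norm_mul, hdnorm, div_one, norm_pow, norm_pow,
        norm_neg, norm_one, one_pow, one_mul, Padic.norm_p]
      calc ((p : ℝ)⁻¹) ^ 2 * ‖hNum p n‖ ≤ ((p : ℝ)⁻¹) ^ 2 * 1 := by
            apply mul_le_mul_of_nonneg_left (hNum_norm_le p n hn') (by positivity)
        _ = (p : ℝ) ^ (-2 : ℤ) := by
            rw [mul_one, inv_pow, zpow_neg]
            norm_cast
end

section
/- Let p be an odd prime, set m = (p-1)/2, and let x be a p-adic integer with x = m + p·t for some t ∈ ℤ_p (i.e., ⟨x⟩_p = m). Then for every integer k with 0 ≤ k ≤ m, one has C(x,k)·C(x+k,k) ≡ C(m,k)·C(m+k,k)·(1 - 4·p^2·t·(t+1)·∑_{j=1}^{k} 1/(2j-1)^2) (mod p^3) in ℤ_p. -/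
open Finset

lemma expand_aux {R : Type*} [CommRing R] (a : ℕ → R) (c : R) (k : ℕ) :
    ∃ r : R, ∏ i ∈ range k, (c - a i)
      = (-1)^k * ((∏ i ∈ range k, a i)
          - c * ∑ j ∈ range k, ∏ i ∈ (range k).erase j, a i)
        + c^2 * r := by
  induction k with
  | zero => exact ⟨0, by simp⟩
  | succ k ih =>
    obtain ⟨r, hr⟩ := ih
    refine ⟨(-1)^(k+1) * ∑ j ∈ range k, ∏ i ∈ (range k).erase j, a i + (c - a k) * r, ?_⟩
    have hsum : ∑ j ∈ range (k+1), ∏ i ∈ (range (k+1)).erase j, a i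
        = a k * (∑ j ∈ range k, ∏ i ∈ (range k).erase j, a i)
          + ∏ i ∈ range k, a i := by
      rw [Finset.sum_range_succ]
      congr 1
      · rw [Finset.mul_sum]
        refine Finset.sum_congr rfl fun j hj => ?_
        rw [Finset.range_add_one, Finset.erase_insert_of_ne (Finset.mem_range.mp hj).ne',
          Finset.prod_insert (fun h => absurd (Finset.mem_of_mem_erase h) (by simp))]
      · rw [Finset.range_add_one, Finset.erase_insert (by simp)]
    rw [Finset.prod_range_succ, hr, Finset.prod_range_succ, hsum]
    ring

lemma cast_choose_field {K : Type*} [Field K] [CharZero K] {n k : ℕ} (h : k ≤ n) :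
    (n.choose k : K) = (∏ i ∈ range k, ((n : K) - i)) / (k.factorial : K) := by
  have h1 : (∏ i ∈ range k, ((n : K) - i)) = ((n.descFactorial k : ℕ) : K) := by
    rw [Nat.descFactorial_eq_prod_range, Nat.cast_prod]
    refine Finset.prod_congr rfl fun i hi => ?_
    rw [Nat.cast_sub (le_trans (Nat.le_of_lt_succ (Nat.lt_succ_of_lt (mem_range.mp hi))) h)]
  rw [h1, Nat.descFactorial_eq_factorial_mul_choose, Nat.cast_mul]
  have hk : (k.factorial : K) ≠ 0 := Nat.cast_ne_zero.mpr k.factorial_ne_zero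
  field_simp

lemma coe_ring_inverse {p : ℕ} [Fact p.Prime] (z : ℤ_[p]) (h : IsUnit z) :
    ((Ring.inverse z : ℤ_[p]) : ℚ_[p]) = ((z : ℚ_[p]))⁻¹ := by
  obtain ⟨u, rfl⟩ := h
  rw [Ring.inverse_unit]
  refine (inv_eq_of_mul_eq_one_right ?_).symm
  rw [← PadicInt.coe_mul, u.mul_inv, PadicInt.coe_one]

lemma norm_natCast_one {p : ℕ} [Fact p.Prime] {n : ℕ} (h : ¬ (p ∣ n)) :
    ‖(n : ℚ_[p])‖ = 1 := by
  refine le_antisymm (by exact_mod_cast Padic.norm_int_le_one (n : ℤ)) ?_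
  by_contra hlt
  push_neg at hlt
  have := (Padic.norm_intCast_lt_one_iff (k := (n : ℤ))).mp (by exact_mod_cast hlt)
  exact h (by exact_mod_cast this)

lemma isUnit_natCast_padicInt {p : ℕ} [Fact p.Prime] {n : ℕ} (h : ¬ (p ∣ n)) :
    IsUnit ((n : ℤ_[p])) := by
  rw [PadicInt.isUnit_iff]
  refine le_antisymm (PadicInt.norm_le_one _) ?_
  by_contra hlt
  push_neg at hlt
  have : ‖((n : ℤ) : ℤ_[p])‖ < 1 := by exact_mod_cast hlt
  have := (PadicInt.norm_int_lt_one_iff_dvd (n : ℤ)).mp this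
  exact h (by exact_mod_cast this)

/-- Let `p` be an odd prime, `m = (p-1)/2`, and `x = m + p t` a `p`-adic integer
(`t ∈ ℤ_p`), so that `⟨x⟩_p = m`. Then for `0 ≤ k ≤ m`,
`C(x,k) C(x+k,k) ≡ C(m,k) C(m+k,k) (1 - 4 p^2 t (t+1) ∑_{j=1}^{k} 1/(2j-1)^2) (mod p^3)`. -/
theorem stmt13 (p : ℕ) [Fact p.Prime] (hp : Odd p) (x t : ℤ_[p])
    (hx : x = (((p - 1) / 2 : ℕ) : ℤ_[p]) + p * t) (k : ℕ) (hk : k ≤ (p - 1) / 2) :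
    ‖qchoose (x : ℚ_[p]) k * qchoose ((x : ℚ_[p]) + (k : ℚ_[p])) k -
        (((p - 1) / 2).choose k : ℚ_[p]) * (((p - 1) / 2 + k).choose k : ℚ_[p]) *
          (1 - 4 * (p : ℚ_[p]) ^ 2 * (t : ℚ_[p]) * ((t : ℚ_[p]) + 1) *
            ∑ i ∈ Finset.range k, (1 / (2 * (i : ℚ_[p]) + 1) ^ 2))‖
      ≤ (p : ℝ) ^ (-3 : ℤ) := by
  obtain ⟨j, hj⟩ := hp
  set m : ℕ := (p - 1) / 2 with hm
  have hpprime := (Fact.out : p.Prime)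
  have hp2 : 2 ≤ p := hpprime.two_le
  have hmj : m = j := by omega
  have hp2m : 2 * m + 1 = p := by omega
  have hkm : k ≤ m := hk
  have hmp : m < p := by omega
  -- basic cast facts
  have h2m : 2 * ((m : ℤ_[p])) + 1 = (p : ℤ_[p]) := by
    have : ((2 * m + 1 : ℕ) : ℤ_[p]) = (p : ℤ_[p]) := by rw [hp2m]
    push_cast at this
    exact this
  have h2x : 2 * x + 1 = (p : ℤ_[p]) * (2 * t + 1) := by
    rw [hx]; linear_combination h2m
  -- the key data in ℤ_[p]
  set α : ℕ → ℤ_[p] := fun i => (2 * (i : ℤ_[p]) + 1) ^ 2 with hα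
  set γ : ℤ_[p] := (p : ℤ_[p]) ^ 2 with hγ
  set u : ℤ_[p] := 2 * t + 1 with hu
  have hunit : ∀ i ∈ range k, IsUnit (α i) := by
    intro i hi
    have hi' : i < k := mem_range.mp hi
    have hnd : ¬ (p ∣ (2 * i + 1)) := by
      intro hdvd
      have h1 : 2 * i + 1 < p := by omega
      have := Nat.le_of_dvd (by omega) hdvd
      omega
    have : α i = ((2 * i + 1 : ℕ) : ℤ_[p]) ^ 2 := by
      rw [hα]; push_cast; ring
    rw [this]
    exact (isUnit_natCast_padicInt hnd).pow 2
  set Sz : ℤ_[p] := ∑ i ∈ range k, Ring.inverse (α i) with hSz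
  have hST : Sz * ∏ i ∈ range k, α i
      = ∑ i ∈ range k, ∏ i' ∈ (range k).erase i, α i' := by
    rw [hSz, Finset.sum_mul]
    refine Finset.sum_congr rfl fun i hi => ?_
    rw [← Finset.mul_prod_erase _ _ hi, ← mul_assoc,
      Ring.inverse_mul_cancel _ (hunit i hi), one_mul]
  obtain ⟨r1, h1⟩ := expand_aux α (γ * u ^ 2) k
  obtain ⟨r2, h2⟩ := expand_aux α γ k
  set T : ℤ_[p] := ∑ i ∈ range k, ∏ i' ∈ (range k).erase i, α i' with hT
  set E : ℤ_[p] := u ^ 4 * r1 - r2 - (-1 : ℤ_[p]) ^ k * (u ^ 2 - 1) * Sz * T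
      + γ * (u ^ 2 - 1) * Sz * r2 with hE
  have hkey : ∏ i ∈ range k, (γ * u ^ 2 - α i)
      - (∏ i ∈ range k, (γ - α i)) * (1 - γ * (u ^ 2 - 1) * Sz) = γ ^ 2 * E := by
    rw [hE]
    linear_combination h1 - (1 - γ * (u ^ 2 - 1) * Sz) * h2
      + (-1 : ℤ_[p]) ^ k * γ * (u ^ 2 - 1) * hST
  -- product identities
  have hP1 : ∏ i ∈ range k, (γ * u ^ 2 - α i)
      = ∏ i ∈ range k, (4 * (x - (i : ℤ_[p])) * (x + (i : ℤ_[p]) + 1)) := by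
    refine Finset.prod_congr rfl fun i _ => ?_
    rw [hα, hγ, hu]
    linear_combination (-(2 * x + 1 + (p : ℤ_[p]) * (2 * t + 1))) * h2x
  have hP2 : ∏ i ∈ range k, (γ - α i)
      = ∏ i ∈ range k, (4 * ((m : ℤ_[p]) - (i : ℤ_[p])) * ((m : ℤ_[p]) + (i : ℤ_[p]) + 1)) := by
    refine Finset.prod_congr rfl fun i _ => ?_
    rw [hα, hγ]
    linear_combination (-(2 * (m : ℤ_[p]) + 1 + (p : ℤ_[p]))) * h2m
  -- move to ℚ_[p]
  set X : ℚ_[p] := (x : ℚ_[p]) with hX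
  have hf : ((Nat.factorial k : ℚ_[p])) ≠ 0 := Nat.cast_ne_zero.mpr k.factorial_ne_zero
  have h4 : (4:ℚ_[p]) ≠ 0 := by norm_num
  have hrefl : ∀ Y : ℚ_[p], ∏ i ∈ range k, (Y + (k:ℚ_[p]) - (i:ℚ_[p]))
      = ∏ i ∈ range k, (Y + (i:ℚ_[p]) + 1) := by
    intro Y
    rw [← Finset.prod_range_reflect (fun i => Y + (i:ℚ_[p]) + 1) k]
    refine Finset.prod_congr rfl fun i hi => ?_
    have hi' : i < k := mem_range.mp hi
    have hc : ((k - 1 - i : ℕ) : ℚ_[p]) = (k:ℚ_[p]) - 1 - (i:ℚ_[p]) := by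
      have h1 : (1:ℕ) ≤ k := by omega
      have h2 : i ≤ k - 1 := by omega
      rw [Nat.cast_sub h2, Nat.cast_sub h1, Nat.cast_one]
    simp only [hc]
    ring
  have coeP : ∀ (f : ℕ → ℤ_[p]) (s : Finset ℕ),
      ((∏ i ∈ s, f i : ℤ_[p]) : ℚ_[p]) = ∏ i ∈ s, ((f i : ℚ_[p])) :=
    fun f s => map_prod (PadicInt.Coe.ringHom (p := p)) f s
  have coeS : ∀ (f : ℕ → ℤ_[p]) (s : Finset ℕ),
      ((∑ i ∈ s, f i : ℤ_[p]) : ℚ_[p]) = ∑ i ∈ s, ((f i : ℚ_[p])) :=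
    fun f s => map_sum (PadicInt.Coe.ringHom (p := p)) f s
  have htwo : ((2:ℤ_[p]):ℚ_[p]) = 2 := by
    have := PadicInt.coe_natCast (p := p) 2
    norm_num at this
    exact this
  have hfour : ((4:ℤ_[p]):ℚ_[p]) = 4 := by
    have := PadicInt.coe_natCast (p := p) 4
    norm_num at this
    exact this
  have hq1 : qchoose X k * qchoose (X + (k:ℚ_[p])) k
      = ((∏ i ∈ range k, (γ * u ^ 2 - α i) : ℤ_[p]) : ℚ_[p])
        / ((4:ℚ_[p])^k * ((Nat.factorial k : ℚ_[p]))^2) := by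
    have hco : ((∏ i ∈ range k, (γ * u ^ 2 - α i) : ℤ_[p]) : ℚ_[p])
        = ∏ i ∈ range k, ((4:ℚ_[p]) * (X - (i:ℚ_[p])) * (X + (i:ℚ_[p]) + 1)) := by
      rw [hP1, coeP]
      refine Finset.prod_congr rfl fun i _ => ?_
      push_cast [hfour]
      ring
    rw [hco]
    unfold qchoose
    rw [div_mul_div_comm, hrefl X, Finset.prod_mul_distrib, Finset.prod_mul_distrib,
      Finset.prod_const, Finset.card_range]
    field_simp
  have hq2 : ((m.choose k : ℚ_[p])) * (((m+k).choose k : ℚ_[p]))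
      = ((∏ i ∈ range k, (γ - α i) : ℤ_[p]) : ℚ_[p])
        / ((4:ℚ_[p])^k * ((Nat.factorial k : ℚ_[p]))^2) := by
    have hco : ((∏ i ∈ range k, (γ - α i) : ℤ_[p]) : ℚ_[p])
        = ∏ i ∈ range k, ((4:ℚ_[p]) * ((m:ℚ_[p]) - (i:ℚ_[p])) * ((m:ℚ_[p]) + (i:ℚ_[p]) + 1)) := by
      rw [hP2, coeP]
      refine Finset.prod_congr rfl fun i _ => ?_
      push_cast [hfour]
      ring
    rw [hco, cast_choose_field hkm, cast_choose_field (Nat.le_add_left k m)]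
    have hmk : (((m + k : ℕ)) : ℚ_[p]) = (m:ℚ_[p]) + (k:ℚ_[p]) := by push_cast; ring
    simp only [hmk]
    rw [div_mul_div_comm, hrefl ((m:ℚ_[p])), Finset.prod_mul_distrib, Finset.prod_mul_distrib,
      Finset.prod_const, Finset.card_range]
    field_simp
  have hS : ((Sz : ℤ_[p]) : ℚ_[p]) = ∑ i ∈ range k, (1 / (2*(i:ℚ_[p])+1)^2) := by
    rw [hSz, coeS]
    refine Finset.sum_congr rfl fun i hi => ?_
    have hai : ((α i : ℤ_[p]) : ℚ_[p]) = (2*(i:ℚ_[p])+1)^2 := by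
      rw [hα]
      push_cast [htwo]
      try ring
    rw [coe_ring_inverse _ (hunit i hi), hai, one_div]
  have hW : ((1 - γ * (u^2 - 1) * Sz : ℤ_[p]) : ℚ_[p])
      = 1 - 4*(p:ℚ_[p])^2*(t:ℚ_[p])*((t:ℚ_[p])+1)
          * ∑ i ∈ range k, (1 / (2*(i:ℚ_[p])+1)^2) := by
    rw [← hS, hγ, hu]
    push_cast [htwo]
    ring
  have hcoekey : ((∏ i ∈ range k, (γ * u ^ 2 - α i) : ℤ_[p]) : ℚ_[p])
      - ((∏ i ∈ range k, (γ - α i) : ℤ_[p]) : ℚ_[p])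
        * ((1 - γ * (u^2 - 1) * Sz : ℤ_[p]) : ℚ_[p])
      = (p:ℚ_[p])^4 * ((E : ℤ_[p]) : ℚ_[p]) := by
    have hc := congrArg (fun z : ℤ_[p] => (z : ℚ_[p])) hkey
    push_cast [htwo] at hc ⊢
    have hγc : ((γ : ℤ_[p]) : ℚ_[p]) = (p:ℚ_[p])^2 := by rw [hγ]; push_cast; ring
    simp only [hγc] at hc ⊢
    linear_combination hc
  rw [hq1, hq2, ← hW]
  have h5 : ((∏ i ∈ range k, (γ * u ^ 2 - α i) : ℤ_[p]) : ℚ_[p])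
        / ((4:ℚ_[p])^k * ((Nat.factorial k : ℚ_[p]))^2)
      - ((∏ i ∈ range k, (γ - α i) : ℤ_[p]) : ℚ_[p])
        / ((4:ℚ_[p])^k * ((Nat.factorial k : ℚ_[p]))^2)
        * ((1 - γ * (u^2 - 1) * Sz : ℤ_[p]) : ℚ_[p])
      = (p:ℚ_[p])^4 * ((E : ℤ_[p]) : ℚ_[p])
        / ((4:ℚ_[p])^k * ((Nat.factorial k : ℚ_[p]))^2) := by
    rw [← hcoekey]
    ring
  rw [h5]
  have hDnorm : ‖(4:ℚ_[p])^k * ((Nat.factorial k : ℚ_[p]))^2‖ = 1 := by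
    have hD4 : (4:ℚ_[p])^k * ((Nat.factorial k : ℚ_[p]))^2
        = ((4^k * (Nat.factorial k)^2 : ℕ) : ℚ_[p]) := by push_cast; ring
    rw [hD4]
    refine norm_natCast_one ?_
    intro hdvd
    rcases (Nat.Prime.dvd_mul hpprime).mp hdvd with h | h
    · have h2 : p ∣ 2^2 := by
        have := hpprime.dvd_of_dvd_pow h
        simpa [show (4:ℕ) = 2^2 by norm_num] using this
      have := (Nat.prime_dvd_prime_iff_eq hpprime Nat.prime_two).mp (hpprime.dvd_of_dvd_pow h2)
      omega
    · have := hpprime.dvd_of_dvd_pow h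
      rw [Nat.Prime.dvd_factorial hpprime] at this
      omega
  rw [norm_div, norm_mul, norm_pow, Padic.norm_p, hDnorm, div_one]
  have hE1 : ‖((E : ℤ_[p]) : ℚ_[p])‖ ≤ 1 := by
    rw [PadicInt.padic_norm_e_of_padicInt]
    exact PadicInt.norm_le_one E
  have hppos : (0:ℝ) < (p:ℝ)⁻¹ := by
    have : (0:ℝ) < (p:ℝ) := by exact_mod_cast hpprime.pos
    positivity
  have hstep : ((p:ℝ)⁻¹)^4 * ‖((E : ℤ_[p]) : ℚ_[p])‖ ≤ ((p:ℝ)⁻¹)^4 := by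
    nlinarith [pow_pos hppos 4]
  refine le_trans hstep ?_
  have h1p : (1:ℝ) ≤ (p:ℝ) := by exact_mod_cast hpprime.one_le
  have heq : ((p:ℝ)⁻¹)^4 = (p:ℝ)^(-4:ℤ) := by
    rw [inv_pow, zpow_neg, ← zpow_natCast]
    norm_num
  rw [heq]
  exact zpow_le_zpow_right₀ h1p (by norm_num)
end

section
/- For all nonnegative integers m and r with 0 ≤ r ≤ m, one has ∑_{j=r}^{m} C(m,j)·C(-m-1,j)·C(j,r) = (-1)^m · C(m,r) · C(m+r,m), as an identity of rational numbers, where C(-m-1,j) = (-m-1)(-m-2)⋯(-m-j)/j! is the generalized binomial coefficient. -/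
/-- Generalized binomial coefficient `C(x,k) = x(x-1)⋯(x-k+1)/k!` for rational `x`. -/
def rchoose (x : ℚ) (k : ℕ) : ℚ := (∏ i ∈ Finset.range k, (x - i)) / (k.factorial : ℚ)

lemma prod_nat_aux (m j : ℕ) :
    (∏ i ∈ Finset.range j, ((m : ℚ) + 1 + i)) = (j.factorial : ℚ) * ((m + j).choose j : ℚ) := by
  induction j with
  | zero => simp
  | succ j ih =>
    rw [Finset.prod_range_succ, ih, Nat.factorial_succ]
    have h2 : ((m + j + 1) * (m + j).choose j : ℕ) = (m + j + 1).choose (j + 1) * (j + 1) :=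
      Nat.add_one_mul_choose_eq (m + j) j
    have h2q : ((m : ℚ) + j + 1) * ((m + j).choose j : ℚ)
        = ((m + j + 1).choose (j + 1) : ℚ) * ((j : ℚ) + 1) := by exact_mod_cast h2
    have h3 : (m + (j + 1)) = (m + j + 1) := by omega
    rw [h3]
    push_cast
    linear_combination ((j.factorial : ℚ)) * h2q

lemma rchoose_neg (m j : ℕ) :
    rchoose (-(m : ℚ) - 1) j = (-1 : ℚ) ^ j * ((m + j).choose j : ℚ) := by
  unfold rchoose
  have h1 : (∏ i ∈ Finset.range j, (-(m : ℚ) - 1 - i))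
      = ∏ i ∈ Finset.range j, ((-1 : ℚ) * ((m : ℚ) + 1 + i)) := by
    apply Finset.prod_congr rfl; intro i _; ring
  rw [h1, Finset.prod_mul_distrib, Finset.prod_const, Finset.card_range, prod_nat_aux]
  have hf : ((j.factorial : ℚ)) ≠ 0 := by exact_mod_cast j.factorial_ne_zero
  field_simp

/-- Auxiliary alternating sum. -/
def S (n a m : ℕ) : ℚ :=
  ∑ k ∈ Finset.range (n + 1), (-1 : ℚ) ^ k * (n.choose k : ℚ) * ((a + k).choose m : ℚ)

lemma S_succ (n a m : ℕ) : S (n + 1) a m = S n a m - S n (a + 1) m := by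
  unfold S
  rw [Finset.sum_range_succ' (fun k => (-1 : ℚ) ^ k * ((n+1).choose k : ℚ) * ((a + k).choose m : ℚ)) (n+1)]
  have hA : (∑ k ∈ Finset.range (n + 1), (-1 : ℚ) ^ k * (n.choose k : ℚ) * ((a + k).choose m : ℚ))
      = (∑ k ∈ Finset.range (n + 1),
          (-1 : ℚ) ^ (k+1) * (n.choose (k+1) : ℚ) * ((a + (k+1)).choose m : ℚ))
        + (a.choose m : ℚ) := by
    rw [Finset.sum_range_succ' (fun k => (-1 : ℚ) ^ k * (n.choose k : ℚ) * ((a + k).choose m : ℚ)) n,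
        Finset.sum_range_succ (fun k => (-1 : ℚ) ^ (k+1) * (n.choose (k+1) : ℚ) * ((a + (k+1)).choose m : ℚ)) n]
    simp [Nat.choose_succ_self]
  have hterm : ∀ k ∈ Finset.range (n+1),
      ((-1 : ℚ) ^ (k+1) * (n.choose (k+1) : ℚ) * ((a + (k+1)).choose m : ℚ)
        - (-1 : ℚ) ^ k * (n.choose k : ℚ) * ((a + 1 + k).choose m : ℚ))
      = (-1 : ℚ) ^ (k+1) * ((n+1).choose (k+1) : ℚ) * ((a + (k+1)).choose m : ℚ) := by
    intro k _
    have hp : ((n+1).choose (k+1) : ℚ) = (n.choose k : ℚ) + (n.choose (k+1) : ℚ) := by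
      exact_mod_cast Nat.choose_succ_succ n k
    have he : (a + 1 + k) = (a + (k+1)) := by omega
    rw [hp, he, pow_succ]
    ring
  have hsum : (∑ k ∈ Finset.range (n+1),
        (-1 : ℚ) ^ (k+1) * ((n+1).choose (k+1) : ℚ) * ((a + (k+1)).choose m : ℚ))
      = (∑ k ∈ Finset.range (n+1),
          (-1 : ℚ) ^ (k+1) * (n.choose (k+1) : ℚ) * ((a + (k+1)).choose m : ℚ))
        - (∑ k ∈ Finset.range (n+1),
          (-1 : ℚ) ^ k * (n.choose k : ℚ) * ((a + 1 + k).choose m : ℚ)) := by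
    rw [← Finset.sum_sub_distrib]
    exact (Finset.sum_congr rfl hterm).symm
  rw [hA, hsum]
  simp
  ring

lemma alt (n : ℕ) : ∀ a m : ℕ, n ≤ m →
    S n a m = (-1 : ℚ) ^ n * (a.choose (m - n) : ℚ) := by
  induction n with
  | zero => intro a m _; simp [S]
  | succ n ih =>
    intro a m hm
    have hn : n ≤ m := Nat.le_of_succ_le hm
    rw [S_succ, ih a m hn, ih (a+1) m hn]
    have ht : m - n = (m - (n+1)) + 1 := by omega
    rw [ht]
    have hp : ((a+1).choose ((m - (n+1)) + 1) : ℚ)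
        = (a.choose (m - (n+1)) : ℚ) + (a.choose ((m - (n+1)) + 1) : ℚ) := by
      exact_mod_cast Nat.choose_succ_succ a (m - (n+1))
    rw [hp, pow_succ]
    ring

/-- For all nonnegative integers `m` and `r` with `r ≤ m`,
`∑_{j=r}^{m} C(m,j) C(-m-1,j) C(j,r) = (-1)^m C(m,r) C(m+r,m)` in `ℚ`. -/
theorem stmt14 (m r : ℕ) (h : r ≤ m) :
    ∑ j ∈ Finset.Icc r m,
        (m.choose j : ℚ) * rchoose (-(m : ℚ) - 1) j * (j.choose r : ℚ) =
      (-1 : ℚ) ^ m * (m.choose r : ℚ) * ((m + r).choose m : ℚ) := by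
  simp only [rchoose_neg]
  rw [← Finset.Ico_add_one_right_eq_Icc, Finset.sum_Ico_eq_sum_range]
  have hrange : m + 1 - r = (m - r) + 1 := by omega
  rw [hrange]
  have key : ∀ k ∈ Finset.range (m - r + 1),
      (m.choose (r + k) : ℚ) * ((-1 : ℚ) ^ (r + k) * ((m + (r + k)).choose (r + k) : ℚ))
          * ((r + k).choose r : ℚ)
        = ((m.choose r : ℚ) * (-1 : ℚ) ^ r)
          * ((-1 : ℚ) ^ k * ((m - r).choose k : ℚ) * (((m + r) + k).choose m : ℚ)) := by
    intro k hk
    have hk' : k ≤ m - r := Nat.lt_succ_iff.mp (Finset.mem_range.mp hk)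
    have h1 : m.choose (r + k) * (r + k).choose r = m.choose r * (m - r).choose k := by
      have := Nat.choose_mul (n := m) (k := r + k) (s := r) (by omega)
      simpa using this
    have h1q : (m.choose (r + k) : ℚ) * ((r + k).choose r : ℚ)
        = (m.choose r : ℚ) * ((m - r).choose k : ℚ) := by exact_mod_cast h1
    have h2 : (m + (r + k)).choose (r + k) = ((m + r) + k).choose m := by
      rw [show m + (r + k) = (r + k) + m from by omega, Nat.choose_symm_add,
        show (r + k) + m = (m + r) + k from by omega]
    rw [h2, pow_add]
    linear_combination ((-1 : ℚ) ^ r * (-1 : ℚ) ^ k * (((m + r) + k).choose m : ℚ)) * h1q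
  rw [Finset.sum_congr rfl key, ← Finset.mul_sum]
  have halt : S (m - r) (m + r) m = (-1 : ℚ) ^ (m - r) * ((m + r).choose (m - (m - r)) : ℚ) :=
    alt (m - r) (m + r) m (by omega)
  have hmm : m - (m - r) = r := by omega
  rw [hmm] at halt
  unfold S at halt
  rw [halt]
  have hsym : (m + r).choose r = (m + r).choose m := (Nat.choose_symm_add).symm
  rw [hsym]
  have hpow : (-1 : ℚ) ^ r * (-1 : ℚ) ^ (m - r) = (-1 : ℚ) ^ m := by
    rw [← pow_add]
    congr 1
    omega
  linear_combination ((m.choose r : ℚ) * ((m + r).choose m : ℚ)) * hpow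
end

section
/- For all positive integers M and N with M ≤ N - 1, one has ∑_{k=M}^{N-1} C(k-1,M-1)/(N-k) = C(N-1,M-1) · ∑_{k=M}^{N-1} 1/k, as an identity of rational numbers. -/
lemma shift_sum_s15 (a b : ℕ) (f : ℕ → ℚ) :
    ∑ j ∈ Finset.Ico (a+1) (b+1), f j = ∑ j ∈ Finset.Ico a b, f (j+1) := by
  rw [← Finset.image_add_right_Ico a b 1, Finset.sum_image (by intro x _ y _ h; simp only at h; omega)]

lemma aux : ∀ n m : ℕ,
    ∑ j ∈ Finset.Ico m n, (j.choose m : ℚ) / ((n : ℚ) - (j : ℚ)) =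
      (n.choose m : ℚ) * ∑ j ∈ Finset.Ico m n, (1 : ℚ) / ((j : ℚ) + 1) := by
  intro n
  induction n with
  | zero => intro m; simp
  | succ n ih =>
    intro m
    match m with
    | 0 =>
      simp only [Nat.choose_zero_right, Nat.cast_one, one_mul, one_div]
      rw [← Finset.range_eq_Ico]
      rw [← Finset.sum_range_reflect (fun j => (((j:ℚ)+1))⁻¹) (n+1)]
      apply Finset.sum_congr rfl
      intro j hj
      simp only [Finset.mem_range] at hj
      have hj' : j ≤ n := by omega
      simp only [Nat.add_sub_cancel]
      rw [Nat.cast_sub hj']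
      push_cast
      ring_nf
    | m' + 1 =>
      by_cases hmn : n ≤ m'
      · rw [Finset.Ico_eq_empty (by omega : ¬ (m'+1) < (n+1))]
        simp
      push_neg at hmn
      rw [shift_sum_s15]
      have step1 : ∑ j ∈ Finset.Ico m' n,
          ((j+1).choose (m'+1) : ℚ) / (((n+1 : ℕ):ℚ) - (((j+1:ℕ)):ℚ)) =
          (n.choose m' : ℚ) * ∑ j ∈ Finset.Ico m' n, (1:ℚ)/((j:ℚ)+1)
            + (n.choose (m'+1) : ℚ) * ∑ j ∈ Finset.Ico (m'+1) n, (1:ℚ)/((j:ℚ)+1) := by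
        have e1 : ∀ j ∈ Finset.Ico m' n,
            ((j+1).choose (m'+1) : ℚ) / (((n+1 : ℕ):ℚ) - (((j+1:ℕ)):ℚ)) =
            (j.choose m' : ℚ) / ((n:ℚ) - j) + (j.choose (m'+1) : ℚ) / ((n:ℚ) - j) := by
          intro j hj
          rw [Nat.choose_succ_succ]
          push_cast
          ring
        rw [Finset.sum_congr rfl e1, Finset.sum_add_distrib, ih m']
        congr 1
        rw [Finset.sum_eq_sum_Ico_succ_bot hmn
          (fun j => (j.choose (m'+1) : ℚ) / ((n:ℚ) - j))]
        simp [Nat.choose_eq_zero_of_lt (by omega : m' < m'+1), ih (m'+1)]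
      rw [step1, Finset.sum_Ico_succ_top (show m'+1 ≤ n by omega) (fun j => (1:ℚ)/((j:ℚ)+1)),
        Finset.sum_eq_sum_Ico_succ_bot hmn (fun j => (1:ℚ)/((j:ℚ)+1)), Nat.choose_succ_succ n m']
      have keyN := Nat.add_one_mul_choose_eq n m'
      rw [Nat.choose_succ_succ] at keyN
      have key : ((n:ℚ)+1) * (n.choose m' : ℚ)
          = ((m':ℚ)+1) * ((n.choose m' : ℚ) + (n.choose (m'+1) : ℚ)) := by
        have keyQ : ((n:ℚ)+1) * (n.choose m' : ℚ)
            = ((n.choose m' : ℚ) + (n.choose (m'+1) : ℚ)) * ((m':ℚ)+1) := by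
          exact_mod_cast keyN
        linear_combination keyQ
      have hm0 : ((m':ℚ)+1) ≠ 0 := by positivity
      have hn0 : ((n:ℚ)+1) ≠ 0 := by positivity
      have h1 : (n.choose m' : ℚ)/((m':ℚ)+1)
          = ((n.choose m' : ℚ) + (n.choose (m'+1) : ℚ))/((n:ℚ)+1) := by
        rw [div_eq_div_iff hm0 hn0]
        linear_combination key
      push_cast
      linear_combination h1



/-- For all positive integers `M` and `N` with `M ≤ N - 1`,
`∑_{k=M}^{N-1} C(k-1,M-1)/(N-k) = C(N-1,M-1) ∑_{k=M}^{N-1} 1/k` in `ℚ`. -/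
theorem stmt15 (M N : ℕ) (hM : 0 < M) (hN : 0 < N) (h : M ≤ N - 1) :
    ∑ k ∈ Finset.Icc M (N - 1), ((k - 1).choose (M - 1) : ℚ) / ((N : ℚ) - (k : ℚ)) =
      ((N - 1).choose (M - 1) : ℚ) * ∑ k ∈ Finset.Icc M (N - 1), (1 : ℚ) / (k : ℚ) := by
  obtain ⟨m, rfl⟩ := Nat.exists_eq_succ_of_ne_zero hM.ne'
  obtain ⟨n, rfl⟩ := Nat.exists_eq_succ_of_ne_zero hN.ne'
  simp only [Nat.succ_sub_one, Nat.succ_eq_add_one] at h ⊢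
  rw [← Finset.Ico_add_one_right_eq_Icc, shift_sum_s15, shift_sum_s15]
  have := aux n m
  rw [Finset.sum_congr rfl (fun j hj => by
    simp only [Nat.add_sub_cancel]
    norm_num : ∀ j ∈ Finset.Ico m n,
      ((j + 1 - 1).choose m : ℚ) / (((n+1:ℕ):ℚ) - ((j+1:ℕ):ℚ)) = (j.choose m : ℚ) / ((n:ℚ) - (j:ℚ)))]
  rw [this]
  congr 1
  apply Finset.sum_congr rfl
  intro j hj
  push_cast
  ring
end

section
/- For all nonnegative integers N and positive integers b, c with b ≥ c > 0, one has ∑_{k=0}^{N} (-1)^k · C(N,k) / C(b+k,c) = c / ((N+c) · C(N+b,b-c)), as an identity of rational numbers. -/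
lemma gdiff (n d : ℕ) (hcn : d + 1 ≤ n) :
    (1:ℚ)/(n.choose (d+1)) - 1/((n+1).choose (d+1)) =
      ((d+1:ℚ)/(d+2)) * (1/((n+1).choose (d+2))) := by
  have A1 : (n.choose (d+1) : ℚ) ≠ 0 := by
    exact_mod_cast (Nat.choose_pos hcn).ne'
  have B1 : ((n+1).choose (d+1) : ℚ) ≠ 0 := by
    exact_mod_cast (Nat.choose_pos (by omega)).ne'
  have B2 : ((n+1).choose (d+2) : ℚ) ≠ 0 := by
    exact_mod_cast (Nat.choose_pos (by omega)).ne'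
  have h1 : ((n:ℚ)+1) * n.choose d = (n+1).choose (d+1) * (d+1) := by
    exact_mod_cast Nat.add_one_mul_choose_eq n d
  have h2 : ((n:ℚ)+1) * n.choose (d+1) = (n+1).choose (d+2) * (d+2) := by
    exact_mod_cast Nat.add_one_mul_choose_eq n (d+1)
  have hp : ((n+1).choose (d+1) : ℚ) = n.choose d + n.choose (d+1) := by
    exact_mod_cast Nat.choose_succ_succ n d
  field_simp
  linear_combination (-(((n+1).choose (d+1) : ℚ) - (n.choose (d+1) : ℚ))) * h2
    + (n.choose (d+1) : ℚ) * h1 + ((n:ℚ)+1) * (n.choose (d+1) : ℚ) * hp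

lemma aux16 (N : ℕ) : ∀ b c : ℕ, 0 < c → c ≤ b →
    ∑ k ∈ Finset.range (N + 1), (-1 : ℚ) ^ k * (N.choose k : ℚ) / ((b + k).choose c : ℚ) =
      (c : ℚ) / (((N : ℚ) + c) * ((N + b).choose (b - c) : ℚ)) := by
  induction N with
  | zero =>
    intro b c hc hbc
    have hsym : b.choose (b - c) = b.choose c := Nat.choose_symm hbc
    have hC : (b.choose c : ℚ) ≠ 0 := by exact_mod_cast (Nat.choose_pos hbc).ne'
    have hc' : (c:ℚ) ≠ 0 := by exact_mod_cast hc.ne'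
    simp [hsym]
    field_simp
  | succ N ih =>
    intro b c hc hbc
    obtain ⟨d, rfl⟩ : ∃ d, c = d + 1 := ⟨c - 1, by omega⟩
    have e1 : ∑ k ∈ Finset.range (N + 1 + 1),
          (-1 : ℚ) ^ k * ((N+1).choose k : ℚ) / ((b + k).choose (d+1) : ℚ)
        = (∑ k ∈ Finset.range (N + 1 + 1),
            (-1 : ℚ) ^ k * (N.choose k : ℚ) / ((b + k).choose (d+1) : ℚ))
          - ∑ k ∈ Finset.range (N + 1),
            (-1 : ℚ) ^ k * (N.choose k : ℚ) / ((b + (k+1)).choose (d+1) : ℚ) := by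
      rw [Finset.sum_range_succ'
          (fun k => (-1 : ℚ) ^ k * ((N+1).choose k : ℚ) / ((b + k).choose (d+1) : ℚ)) (N+1),
        Finset.sum_range_succ'
          (fun k => (-1 : ℚ) ^ k * (N.choose k : ℚ) / ((b + k).choose (d+1) : ℚ)) (N+1)]
      have hS : ∑ k ∈ Finset.range (N + 1),
            (-1 : ℚ) ^ (k+1) * ((N+1).choose (k+1) : ℚ) / ((b + (k+1)).choose (d+1) : ℚ)
          = ∑ k ∈ Finset.range (N + 1),
            ((-1 : ℚ) ^ (k+1) * (N.choose (k+1) : ℚ) / ((b + (k+1)).choose (d+1) : ℚ)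
              - (-1 : ℚ) ^ k * (N.choose k : ℚ) / ((b + (k+1)).choose (d+1) : ℚ)) := by
        apply Finset.sum_congr rfl
        intro k _
        rw [Nat.choose_succ_succ]
        push_cast
        ring
      rw [hS, Finset.sum_sub_distrib]
      simp only [Nat.choose_zero_right]
      ring
    have e2 : ∑ k ∈ Finset.range (N + 1 + 1),
          (-1 : ℚ) ^ k * (N.choose k : ℚ) / ((b + k).choose (d+1) : ℚ)
        = ∑ k ∈ Finset.range (N + 1),
          (-1 : ℚ) ^ k * (N.choose k : ℚ) / ((b + k).choose (d+1) : ℚ) := by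
      rw [Finset.sum_range_succ]
      simp [Nat.choose_succ_self]
    rw [e1, e2, ← Finset.sum_sub_distrib]
    have e3 : ∑ k ∈ Finset.range (N + 1),
          ((-1 : ℚ) ^ k * (N.choose k : ℚ) / ((b + k).choose (d+1) : ℚ)
            - (-1 : ℚ) ^ k * (N.choose k : ℚ) / ((b + (k+1)).choose (d+1) : ℚ))
        = ((d+1:ℚ)/(d+2)) * ∑ k ∈ Finset.range (N + 1),
            (-1 : ℚ) ^ k * (N.choose k : ℚ) / (((b+1) + k).choose (d+2) : ℚ) := by
      rw [Finset.mul_sum]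
      apply Finset.sum_congr rfl
      intro k _
      have h1 : (-1 : ℚ) ^ k * (N.choose k : ℚ) / ((b + k).choose (d+1) : ℚ)
            - (-1 : ℚ) ^ k * (N.choose k : ℚ) / ((b + (k+1)).choose (d+1) : ℚ)
          = (-1 : ℚ) ^ k * (N.choose k : ℚ)
            * ((1:ℚ)/((b+k).choose (d+1)) - 1/((b+k+1).choose (d+1))) := by
        have : b + (k+1) = (b + k) + 1 := by omega
        rw [this]; ring
      rw [h1, gdiff (b+k) d (by omega)]
      have : b + k + 1 = (b+1) + k := by omega
      rw [this]; ring
    rw [e3, ih (b+1) (d+2) (by omega) (by omega)]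
    have h4 : (b+1) - (d+2) = b - (d+1) := by omega
    have h5 : N + (b+1) = N + 1 + b := by omega
    rw [h4, h5]
    have hX : ((N + 1 + b).choose (b - (d+1)) : ℚ) ≠ 0 := by
      exact_mod_cast (Nat.choose_pos (by omega)).ne'
    have hY : ((N:ℚ) + (d+2)) ≠ 0 := by positivity
    have hd2 : ((d:ℚ)+2) ≠ 0 := by positivity
    push_cast
    rw [div_mul_div_comm]
    rw [div_eq_div_iff (by positivity) (by
      exact mul_ne_zero (by positivity) hX)]
    ring

/-- For all nonnegative integers `N` and positive integers `b ≥ c > 0`,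
`∑_{k=0}^{N} (-1)^k C(N,k) / C(b+k,c) = c / ((N+c) C(N+b,b-c))` in `ℚ`. -/
theorem stmt16 (N b c : ℕ) (hc : 0 < c) (hbc : c ≤ b) :
    ∑ k ∈ Finset.range (N + 1), (-1 : ℚ) ^ k * (N.choose k : ℚ) / ((b + k).choose c : ℚ) =
      (c : ℚ) / (((N : ℚ) + c) * ((N + b).choose (b - c) : ℚ)) :=
  aux16 N b c hc hbc
end

section
/- Let p be an odd prime and let m be a nonnegative integer with m < (p-1)/2. Then ∑_{k=m+1}^{p-m-1} C(m+k,k)/(k-m) ≡ 0 (mod p), as a congruence of p-integral rational numbers. -/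
open Finset

lemma key_id : ∀ m n : ℕ,
    ∑ t ∈ Icc 1 n, ((m + n - t).choose m : ℚ) / t
      = ((m + n).choose m : ℚ) * ∑ t ∈ Icc 1 n, (1 : ℚ) / ((m : ℚ) + t) := by
  intro m
  induction m with
  | zero =>
    intro n
    rw [Finset.mul_sum]
    refine Finset.sum_congr rfl fun t ht => ?_
    simp [Nat.choose_zero_right]
  | succ m ih =>
    intro n
    induction n with
    | zero => simp
    | succ n ihn =>
      have hsplit : ∑ t ∈ Icc 1 (n+1), ((m + 1 + (n+1) - t).choose (m+1) : ℚ) / t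
          = ∑ t ∈ Icc 1 (n+1), (((m + (n+1) - t).choose m : ℚ) / t
              + ((m + 1 + n - t).choose (m+1) : ℚ) / t) := by
        refine Finset.sum_congr rfl fun t ht => ?_
        simp only [mem_Icc] at ht
        have h1 : m + 1 + (n+1) - t = (m + 1 + n - t) + 1 := by omega
        have h2 : m + (n+1) - t = m + 1 + n - t := by omega
        rw [h1, h2, Nat.choose_succ_succ]
        push_cast
        ring
      rw [hsplit, Finset.sum_add_distrib, ih (n+1)]
      have htop : ∑ t ∈ Icc 1 (n+1), ((m + 1 + n - t).choose (m+1) : ℚ) / t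
          = ∑ t ∈ Icc 1 n, ((m + 1 + n - t).choose (m+1) : ℚ) / t := by
        rw [Finset.sum_Icc_succ_top (by omega)]
        have : m + 1 + n - (n+1) = m := by omega
        rw [this, Nat.choose_succ_self, Nat.cast_zero, zero_div, add_zero]
      rw [htop, ihn]
      -- now pure harmonic-sum algebra
      have e1 : ∀ (c : ℚ) (k : ℕ), ∑ t ∈ Icc 1 k, (1:ℚ)/(c + t) = ∑ i ∈ range k, (1:ℚ)/(c + (1+i)) := by
        intro c k
        rw [← Finset.Ico_add_one_right_eq_Icc, Finset.sum_Ico_eq_sum_range]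
        simp [add_comm]
      rw [e1, e1, e1]
      have hA : ∑ i ∈ range (n+1), (1:ℚ)/((m:ℚ)+(1+(i:ℚ)))
          = 1/((m:ℚ)+1) + ∑ i ∈ range n, (1:ℚ)/(((m+1:ℕ):ℚ)+(1+(i:ℚ))) := by
        rw [Finset.sum_range_succ']
        rw [add_comm]
        congr 1
        · norm_num
        · apply Finset.sum_congr rfl
          intro i _
          congr 1
          push_cast
          ring
      have hB : ∑ i ∈ range (n+1), (1:ℚ)/(((m+1:ℕ):ℚ)+(1+(i:ℚ)))
          = (∑ i ∈ range n, (1:ℚ)/(((m+1:ℕ):ℚ)+(1+(i:ℚ)))) + 1/(((m+1:ℕ):ℚ)+(1+(n:ℚ))) :=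
        Finset.sum_range_succ _ _
      rw [hA, hB]
      set H : ℚ := ∑ i ∈ range n, (1:ℚ)/(((m+1:ℕ):ℚ)+(1+(i:ℚ))) with hH
      have hpascal : ((m + 1 + (n+1)).choose (m+1) : ℚ)
          = ((m + (n+1)).choose m : ℚ) + ((m + 1 + n).choose (m+1) : ℚ) := by
        have h5 : m + 1 + (n+1) = (m + 1 + n) + 1 := by omega
        rw [h5, Nat.choose_succ_succ]
        have h6 : m + 1 + n = m + (n+1) := by omega
        rw [h6]
        push_cast; ring
      have h7 := Nat.add_one_mul_choose_eq (m + (n+1)) m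
      have harg : m + (n + 1) + 1 = m + 1 + (n + 1) := by omega
      rw [harg] at h7
      have hkey : ((m:ℚ) + 1 + ((n:ℚ) + 1)) * ((m + (n+1)).choose m : ℚ)
          = (((m + (n+1)).choose m : ℚ) + ((m + 1 + n).choose (m+1) : ℚ)) * ((m:ℚ) + 1) := by
        rw [← hpascal]
        exact_mod_cast congrArg (fun x : ℕ => (x : ℚ)) h7
      have hm1 : ((m:ℚ) + 1) ≠ 0 := by positivity
      have hfrac : ((m + (n+1)).choose m : ℚ) / ((m:ℚ) + 1)
          = (((m + (n+1)).choose m : ℚ) + ((m + 1 + n).choose (m+1) : ℚ)) / ((m:ℚ) + 1 + (1 + (n:ℚ))) := by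
        rw [div_eq_div_iff hm1 (by positivity)]
        linear_combination hkey
      rw [hpascal]
      push_cast at hfrac ⊢
      linear_combination hfrac
lemma asc_prod (n : ℕ) : ∀ k, n.ascFactorial k = ∏ i ∈ range k, (n + i)
  | 0 => by simp
  | k + 1 => by rw [Nat.ascFactorial_succ, prod_range_succ, asc_prod n k, mul_comm]

lemma prodA (m j : ℕ) : Nat.factorial m * (m + m + j).choose m = ∏ i ∈ range m, (m + j + 1 + i) := by
  have h := Nat.ascFactorial_eq_factorial_mul_choose (m + j) m
  rw [show m + j + m = m + m + j from by omega] at h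
  rw [← h, asc_prod]

lemma prodB (m t : ℕ) (ht : t ≤ m) :
    Nat.factorial m * (m + m - t).choose m = ∏ i ∈ range m, (m + 1 + i - t) := by
  have h := Nat.ascFactorial_eq_factorial_mul_choose (m - t) m
  rw [show m - t + m = m + m - t from by omega] at h
  rw [← h, asc_prod]
  exact Finset.prod_congr rfl fun i _ => by omega

lemma sum_eq_units (p : ℕ) [Fact p.Prime] (e : ℕ) (he : e ≠ 0) :
    ∑ x : ZMod p, x ^ e = ∑ u : (ZMod p)ˣ, ((u : ZMod p) ^ e) := by
  classical
  let φ : (ZMod p)ˣ ↪ ZMod p := ⟨fun x => x, Units.val_injective⟩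
  have huniv : (Finset.univ.map φ) = Finset.univ \ {0} := by
    ext x
    simp only [Finset.mem_map, Finset.mem_univ, Function.Embedding.coeFn_mk, true_and,
      Finset.mem_sdiff, Finset.mem_singleton, φ]
    exact isUnit_iff_ne_zero
  calc ∑ x : ZMod p, x ^ e
      = ∑ x ∈ Finset.univ \ {0}, x ^ e := by
        rw [← Finset.sum_sdiff (Finset.subset_univ {0}), Finset.sum_singleton, zero_pow he,
          add_zero]
    _ = ∑ u : (ZMod p)ˣ, ((u : ZMod p) ^ e) := by
        rw [← huniv, Finset.sum_map]
        simp [φ]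

lemma psum (p : ℕ) [Fact p.Prime] (e : ℕ) (he : 1 ≤ e) :
    ∑ x : ZMod p, x ^ e = if (p - 1) ∣ e then -1 else 0 := by
  classical
  rw [sum_eq_units p e (by omega), FiniteField.sum_pow_units, ZMod.card]

lemma inv_eq_pow (p : ℕ) [Fact p.Prime] (hp3 : 3 ≤ p) (x : ZMod p) : x⁻¹ = x ^ (p - 2) := by
  rcases eq_or_ne x 0 with rfl | hx
  · rw [inv_zero, zero_pow (by omega)]
  · have h1 : x ^ (p - 2) * x = 1 := by
      rw [← pow_succ, show p - 2 + 1 = p - 1 from by omega]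
      exact ZMod.pow_card_sub_one_eq_one hx
    exact inv_eq_of_mul_eq_one_left h1

lemma nat_id (m : ℕ) :
    ∑ t ∈ Icc 1 m, (m + m - t).choose m * (Nat.factorial (m + m) / t)
      = ∑ t ∈ Icc 1 m, (m + m).choose m * (Nat.factorial (m + m) / (m + t)) := by
  have hfac : ∀ t ∈ Icc 1 m, (((m + m - t).choose m * (Nat.factorial (m + m) / t) : ℕ) : ℚ)
      = ((Nat.factorial (m + m) : ℕ) : ℚ) * (((m + m - t).choose m : ℚ) / t) := by
    intro t ht
    simp only [mem_Icc] at ht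
    rw [Nat.cast_mul, Nat.cast_div (Nat.dvd_factorial (by omega) (by omega))
      (Nat.cast_ne_zero.mpr (by omega))]
    ring
  have hfac2 : ∀ t ∈ Icc 1 m, (((m + m).choose m * (Nat.factorial (m + m) / (m + t)) : ℕ) : ℚ)
      = ((Nat.factorial (m + m) : ℕ) : ℚ) * (((m + m).choose m : ℚ) * (1 / ((m : ℚ) + t))) := by
    intro t ht
    simp only [mem_Icc] at ht
    rw [Nat.cast_mul, Nat.cast_div (Nat.dvd_factorial (by omega) (by omega))
      (Nat.cast_ne_zero.mpr (by omega))]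
    push_cast
    ring
  rw [← Nat.cast_inj (R := ℚ), Nat.cast_sum, Nat.cast_sum,
    Finset.sum_congr rfl hfac, Finset.sum_congr rfl hfac2,
    ← Finset.mul_sum, ← Finset.mul_sum, key_id m m, ← Finset.mul_sum]

lemma main_zmod (p : ℕ) [Fact p.Prime] (hp3 : 3 ≤ p) (m : ℕ) (hm2 : 2*m + 2 ≤ p) :
    ∑ j ∈ Icc 1 (p - 2*m - 1), ((m + m + j).choose m : ZMod p) * ((j : ZMod p))⁻¹ = 0 := by
  classical
  have hp' : p.Prime := Fact.out
  set c : ℕ → ZMod p := fun i => ((m + 1 + i : ℕ) : ZMod p) with hc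
  set G : ZMod p → ZMod p := fun x => x ^ (p - 2) * ∏ i ∈ range m, (x + c i) with hG
  have hcast_ne : ∀ a : ℕ, 1 ≤ a → a ≤ p - 1 → ((a : ℕ) : ZMod p) ≠ 0 := by
    intro a h1 h2
    rw [Ne, ZMod.natCast_eq_zero_iff]
    intro h
    have := Nat.le_of_dvd (by omega) h
    omega
  -- Step A
  have hstepA : (Nat.factorial m : ZMod p)
        * ∑ j ∈ Icc 1 (p - 2*m - 1), ((m + m + j).choose m : ZMod p) * ((j : ZMod p))⁻¹
      = ∑ j ∈ Icc 1 (p - 2*m - 1), G ((j : ℕ) : ZMod p) := by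
    rw [Finset.mul_sum]
    refine Finset.sum_congr rfl fun j hj => ?_
    simp only [mem_Icc] at hj
    have h1 : (Nat.factorial m : ZMod p) * ((m + m + j).choose m : ZMod p)
        = ∏ i ∈ range m, (((j : ℕ) : ZMod p) + c i) := by
      rw [← Nat.cast_mul, prodA m j, Nat.cast_prod]
      refine Finset.prod_congr rfl fun i _ => ?_
      simp only [hc]
      push_cast
      ring
    have h2 : (((j : ℕ) : ZMod p))⁻¹ = ((j : ℕ) : ZMod p) ^ (p - 2) := inv_eq_pow p hp3 _
    rw [← mul_assoc, h1, h2, hG, mul_comm]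
  suffices hS : ∑ j ∈ Icc 1 (p - 2*m - 1), G ((j : ℕ) : ZMod p) = 0 by
    have hfm : (Nat.factorial m : ZMod p) ≠ 0 := by
      rw [Ne, ZMod.natCast_eq_zero_iff]
      intro hdvd
      have := (Nat.Prime.dvd_factorial hp').mp hdvd
      omega
    rcases mul_eq_zero.mp (hstepA.trans hS) with h | h
    · exact absurd h hfm
    · exact h
  -- total sum over ZMod p
  have htotal : ∑ x : ZMod p, G x = ∑ j ∈ range p, G ((j : ℕ) : ZMod p) := by
    refine Finset.sum_nbij' (fun x => x.val) (fun j => ((j : ℕ) : ZMod p)) ?_ ?_ ?_ ?_ ?_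
    · intro x _; exact mem_range.mpr (ZMod.val_lt x)
    · intro j _; exact mem_univ _
    · intro x _; exact ZMod.natCast_rightInverse x
    · intro j hj; exact ZMod.val_cast_of_lt (mem_range.mp hj)
    · intro x _
      rw [ZMod.natCast_rightInverse x]
  -- splitting range p
  have h1p : 1 ≤ p - 2*m := by omega
  have h2p : p - 2*m ≤ p - m := by omega
  have h3p : p - m ≤ p := by omega
  have hsplit : ∑ j ∈ range p, G ((j : ℕ) : ZMod p)
      = G ((0 : ℕ) : ZMod p) + (∑ j ∈ Ico 1 (p - 2*m), G ((j : ℕ) : ZMod p))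
        + (∑ j ∈ Ico (p - 2*m) (p - m), G ((j : ℕ) : ZMod p))
        + ∑ j ∈ Ico (p - m) p, G ((j : ℕ) : ZMod p) := by
    rw [range_eq_Ico,
      ← Finset.sum_Ico_consecutive (fun j : ℕ => G ((j : ℕ) : ZMod p)) (show 0 ≤ p - m by omega) h3p,
      ← Finset.sum_Ico_consecutive (fun j : ℕ => G ((j : ℕ) : ZMod p)) (show 0 ≤ p - 2*m by omega) h2p,
      ← Finset.sum_Ico_consecutive (fun j : ℕ => G ((j : ℕ) : ZMod p)) (show 0 ≤ 1 by omega) h1p]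
    have : Finset.Ico 0 1 = {0} := rfl
    rw [this, Finset.sum_singleton]
  have hIcc : Icc 1 (p - 2*m - 1) = Ico 1 (p - 2*m) := by
    rw [← Finset.Ico_add_one_right_eq_Icc]
    congr 1
    omega
  have hG0 : G ((0 : ℕ) : ZMod p) = 0 := by
    simp only [hG, Nat.cast_zero]
    rw [zero_pow (show p - 2 ≠ 0 by omega), zero_mul]
  have hmid : ∑ j ∈ Ico (p - 2*m) (p - m), G ((j : ℕ) : ZMod p) = 0 := by
    refine Finset.sum_eq_zero fun j hj => ?_
    simp only [mem_Ico] at hj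
    have hi0 : p - m - 1 - j ∈ range m := by
      rw [mem_range]; omega
    have hzero : ((j : ℕ) : ZMod p) + c (p - m - 1 - j) = 0 := by
      simp only [hc]
      rw [← Nat.cast_add, show j + (m + 1 + (p - m - 1 - j)) = p from by omega, ZMod.natCast_self]
    simp only [hG]
    rw [Finset.prod_eq_zero hi0 hzero, mul_zero]
  -- tail
  have hterm : ∀ t ∈ Icc 1 m, G (((p - t : ℕ)) : ZMod p)
      = -(((t : ℕ) : ZMod p))⁻¹ * ((Nat.factorial m * (m + m - t).choose m : ℕ) : ZMod p) := by
    intro t ht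
    simp only [mem_Icc] at ht
    have hneg : (((p - t : ℕ)) : ZMod p) = -((t : ℕ) : ZMod p) := by
      rw [Nat.cast_sub (by omega), ZMod.natCast_self, zero_sub]
    have hFprod : ∏ i ∈ range m, (-((t : ℕ) : ZMod p) + c i)
        = ((∏ i ∈ range m, (m + 1 + i - t) : ℕ) : ZMod p) := by
      rw [Nat.cast_prod]
      refine Finset.prod_congr rfl fun i _ => ?_
      rw [Nat.cast_sub (by omega)]
      simp only [hc]
      ring
    simp only [hG]
    rw [hneg, ← inv_eq_pow p hp3, hFprod, ← prodB m t ht.2, inv_neg]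
  have htail : ∑ j ∈ Ico (p - m) p, G ((j : ℕ) : ZMod p)
      = -∑ t ∈ Icc 1 m, (((t : ℕ) : ZMod p))⁻¹
          * ((Nat.factorial m * (m + m - t).choose m : ℕ) : ZMod p) := by
    rw [← Finset.sum_neg_distrib]
    refine Finset.sum_nbij' (fun j => p - j) (fun t => p - t) ?_ ?_ ?_ ?_ ?_
    · intro j hj; simp only [mem_Ico] at hj; rw [mem_Icc]
      refine ⟨?_, ?_⟩
      · show 1 ≤ p - j; omega
      · show p - j ≤ m; omega
    · intro t ht; simp only [mem_Icc] at ht; rw [mem_Ico]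
      refine ⟨?_, ?_⟩
      · show p - m ≤ p - t; omega
      · show p - t < p; omega
    · intro j hj; simp only [mem_Ico] at hj
      show p - (p - j) = j; omega
    · intro t ht; simp only [mem_Icc] at ht
      show p - (p - t) = t; omega
    · intro j hj
      simp only [mem_Ico] at hj
      have hj' : p - (p - j) = j := by omega
      have h := hterm (p - j) (by rw [mem_Icc]; omega)
      rw [hj'] at h
      simpa [neg_mul] using h
  -- full sum evaluation
  have hfull : ∑ x : ZMod p, G x = -∑ i ∈ range m, ∏ i' ∈ (range m) \ {i}, c i' := by
    have hexp : ∀ x : ZMod p, G x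
        = ∑ T ∈ (range m).powerset, x ^ (p - 2 + T.card) * ∏ i ∈ range m \ T, c i := by
      intro x
      simp only [hG]
      rw [Finset.prod_add, Finset.mul_sum]
      refine Finset.sum_congr rfl fun T hT => ?_
      rw [Finset.prod_const, pow_add, mul_assoc]
    rw [Finset.sum_congr rfl (fun x _ => hexp x), Finset.sum_comm]
    have hinner : ∀ T ∈ (range m).powerset,
        ∑ x : ZMod p, x ^ (p - 2 + T.card) * ∏ i ∈ range m \ T, c i
          = (if T.card = 1 then (-1 : ZMod p) else 0) * ∏ i ∈ range m \ T, c i := by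
      intro T hT
      have hcard : T.card ≤ m := by
        have := Finset.card_le_card (Finset.mem_powerset.mp hT)
        simpa using this
      rw [← Finset.sum_mul]
      congr 1
      rw [psum p _ (by omega)]
      by_cases hT1 : T.card = 1
      · rw [if_pos hT1, if_pos]
        rw [hT1]
        exact ⟨1, by omega⟩
      · rw [if_neg hT1, if_neg]
        intro hdvd
        obtain ⟨k, hk⟩ := hdvd
        rcases Nat.lt_or_ge k 2 with hk2 | hk2
        · interval_cases k <;> omega
        · have h2 : (p-1) * 2 ≤ (p-1) * k := Nat.mul_le_mul_left _ hk2
          omega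
    rw [Finset.sum_congr rfl hinner]
    have hstep : ∑ T ∈ (range m).powerset,
        (if T.card = 1 then (-1 : ZMod p) else 0) * ∏ i ∈ range m \ T, c i
        = ∑ T ∈ (range m).powerset,
          (if T.card = 1 then -∏ i ∈ range m \ T, c i else 0) := by
      refine Finset.sum_congr rfl fun T _ => ?_
      split_ifs <;> simp
    rw [hstep, ← Finset.sum_filter, ← Finset.powersetCard_eq_filter,
      Finset.powersetCard_one, Finset.sum_map, ← Finset.sum_neg_distrib]
    rfl
  -- the E-term computation
  have hEterm : ∀ i ∈ range m, ∏ i' ∈ (range m) \ {i}, c i'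
      = (((m + 1 + i : ℕ)) : ZMod p)⁻¹ * ((Nat.factorial m * (m + m).choose m : ℕ) : ZMod p) := by
    intro i hi
    have hi' := mem_range.mp hi
    have hne : (((m + 1 + i : ℕ)) : ZMod p) ≠ 0 := hcast_ne _ (by omega) (by omega)
    have hmul : (((m + 1 + i : ℕ)) : ZMod p) * ∏ i' ∈ (range m) \ {i}, c i'
        = ((Nat.factorial m * (m + m).choose m : ℕ) : ZMod p) := by
      have hprod0 : Nat.factorial m * (m + m).choose m = ∏ i' ∈ range m, (m + 1 + i') := by
        have := prodB m 0 (Nat.zero_le m)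
        simpa using this
      rw [Finset.sdiff_singleton_eq_erase,
        show (((m + 1 + i : ℕ)) : ZMod p) = c i from rfl,
        Finset.mul_prod_erase _ _ hi, hprod0, Nat.cast_prod]
    rw [← hmul, ← mul_assoc, inv_mul_cancel₀ hne, one_mul]
  -- the identity transported to ZMod p
  have hid : ∑ t ∈ Icc 1 m, (((t : ℕ)) : ZMod p)⁻¹
        * ((Nat.factorial m * (m + m - t).choose m : ℕ) : ZMod p)
      = ∑ i ∈ range m, ∏ i' ∈ (range m) \ {i}, c i' := by
    have h1 : ((∑ t ∈ Icc 1 m, (m + m - t).choose m * (Nat.factorial (m + m) / t) : ℕ) : ZMod p)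
        = ((∑ t ∈ Icc 1 m, (m + m).choose m * (Nat.factorial (m + m) / (m + t)) : ℕ) : ZMod p) := by
      exact_mod_cast congrArg (fun x : ℕ => (x : ZMod p)) (nat_id m)
    rw [Nat.cast_sum, Nat.cast_sum] at h1
    have hdivA : ∀ t ∈ Icc 1 m, ((Nat.factorial (m + m) / t : ℕ) : ZMod p)
        = ((t : ℕ) : ZMod p)⁻¹ * ((Nat.factorial (m + m) : ℕ) : ZMod p) := by
      intro t ht
      simp only [mem_Icc] at ht
      have hdvd : t ∣ Nat.factorial (m + m) := Nat.dvd_factorial (by omega) (by omega)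
      have hne : ((t : ℕ) : ZMod p) ≠ 0 := hcast_ne _ (by omega) (by omega)
      have hmul : ((t : ℕ) : ZMod p) * ((Nat.factorial (m + m) / t : ℕ) : ZMod p)
          = ((Nat.factorial (m + m) : ℕ) : ZMod p) := by
        rw [← Nat.cast_mul, Nat.mul_div_cancel' hdvd]
      rw [← hmul, ← mul_assoc, inv_mul_cancel₀ hne, one_mul]
    have hdivB : ∀ t ∈ Icc 1 m, ((Nat.factorial (m + m) / (m + t) : ℕ) : ZMod p)
        = ((m + t : ℕ) : ZMod p)⁻¹ * ((Nat.factorial (m + m) : ℕ) : ZMod p) := by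
      intro t ht
      simp only [mem_Icc] at ht
      have hdvd : m + t ∣ Nat.factorial (m + m) := Nat.dvd_factorial (by omega) (by omega)
      have hne : ((m + t : ℕ) : ZMod p) ≠ 0 := hcast_ne _ (by omega) (by omega)
      have hmul : ((m + t : ℕ) : ZMod p) * ((Nat.factorial (m + m) / (m + t) : ℕ) : ZMod p)
          = ((Nat.factorial (m + m) : ℕ) : ZMod p) := by
        rw [← Nat.cast_mul, Nat.mul_div_cancel' hdvd]
      rw [← hmul, ← mul_assoc, inv_mul_cancel₀ hne, one_mul]
    have h2 : (∑ t ∈ Icc 1 m, ((m + m - t).choose m : ZMod p) * ((t : ℕ) : ZMod p)⁻¹)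
          * ((Nat.factorial (m + m) : ℕ) : ZMod p)
        = (∑ t ∈ Icc 1 m, ((m + m).choose m : ZMod p) * ((m + t : ℕ) : ZMod p)⁻¹)
          * ((Nat.factorial (m + m) : ℕ) : ZMod p) := by
      rw [Finset.sum_mul, Finset.sum_mul]
      calc ∑ t ∈ Icc 1 m, ((m + m - t).choose m : ZMod p) * ((t : ℕ) : ZMod p)⁻¹
            * ((Nat.factorial (m + m) : ℕ) : ZMod p)
          = ∑ t ∈ Icc 1 m, (((m + m - t).choose m * (Nat.factorial (m + m) / t) : ℕ) : ZMod p) := by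
            refine Finset.sum_congr rfl fun t ht => ?_
            rw [Nat.cast_mul, hdivA t ht]
            ring
        _ = ∑ t ∈ Icc 1 m, (((m + m).choose m * (Nat.factorial (m + m) / (m + t)) : ℕ) : ZMod p) := h1
        _ = ∑ t ∈ Icc 1 m, ((m + m).choose m : ZMod p) * ((m + t : ℕ) : ZMod p)⁻¹
            * ((Nat.factorial (m + m) : ℕ) : ZMod p) := by
            refine Finset.sum_congr rfl fun t ht => ?_
            rw [Nat.cast_mul, hdivB t ht]
            ring
    have hfacne : ((Nat.factorial (m + m) : ℕ) : ZMod p) ≠ 0 := by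
      rw [Ne, ZMod.natCast_eq_zero_iff]
      intro hdvd
      have := (Nat.Prime.dvd_factorial hp').mp hdvd
      omega
    have h3 := mul_right_cancel₀ hfacne h2
    -- now multiply by m! and massage
    calc ∑ t ∈ Icc 1 m, (((t : ℕ)) : ZMod p)⁻¹
          * ((Nat.factorial m * (m + m - t).choose m : ℕ) : ZMod p)
        = (Nat.factorial m : ZMod p)
          * ∑ t ∈ Icc 1 m, ((m + m - t).choose m : ZMod p) * ((t : ℕ) : ZMod p)⁻¹ := by
          rw [Finset.mul_sum]
          refine Finset.sum_congr rfl fun t ht => ?_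
          rw [Nat.cast_mul]
          ring
      _ = (Nat.factorial m : ZMod p)
          * ∑ t ∈ Icc 1 m, ((m + m).choose m : ZMod p) * ((m + t : ℕ) : ZMod p)⁻¹ := by rw [h3]
      _ = ∑ i ∈ range m, ∏ i' ∈ (range m) \ {i}, c i' := by
          rw [Finset.sum_congr rfl hEterm, Finset.mul_sum]
          rw [show Icc 1 m = Ico 1 (m + 1) from by rw [Finset.Ico_add_one_right_eq_Icc], Finset.sum_Ico_eq_sum_range]
          simp only [Nat.add_sub_cancel]
          refine Finset.sum_congr rfl fun i _ => ?_
          rw [Nat.cast_mul]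
          rw [show m + (1 + i) = m + 1 + i from by omega]
          ring
  -- assemble
  rw [hIcc]
  have hA := htotal
  rw [hsplit, hG0, hmid, htail, hfull, ← hid] at hA
  linear_combination -hA

/-- Let `p` be an odd prime and `m < (p-1)/2` a nonnegative integer. Then
`∑_{k=m+1}^{p-m-1} C(m+k,k)/(k-m) ≡ 0 (mod p)` as a congruence of `p`-integral
rationals. -/
theorem stmt18 (p : ℕ) [Fact p.Prime] (hp : Odd p) (m : ℕ) (hm : m < (p - 1) / 2) :
    ‖(((∑ k ∈ Finset.Icc (m + 1) (p - m - 1),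
            ((m + k).choose k : ℚ) / ((k : ℚ) - (m : ℚ))) : ℚ) : ℚ_[p])‖
      ≤ (p : ℝ)⁻¹ := by
  have hp' : p.Prime := Fact.out
  obtain ⟨w, hw⟩ := hp
  have hm2 : 2*m + 2 ≤ p := by omega
  have hp3 : 3 ≤ p := by omega
  set s := Finset.Icc (m+1) (p - m - 1) with hs
  set D : ℕ := ∏ k ∈ s, (k - m) with hD
  set N : ℕ := ∑ k ∈ s, (m+k).choose k * ∏ k' ∈ s.erase k, (k' - m) with hN
  have hmem : ∀ k ∈ s, m + 1 ≤ k ∧ k ≤ p - m - 1 := by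
    intro k hk
    rw [hs, mem_Icc] at hk
    exact hk
  have hD0 : (D : ℚ) ≠ 0 := by
    rw [hD]
    push_cast [Nat.cast_prod]
    refine Finset.prod_ne_zero_iff.mpr fun k hk => ?_
    have := hmem k hk
    exact Nat.cast_ne_zero.mpr (by omega)
  -- S = N / D
  have hSD : (∑ k ∈ s, ((m + k).choose k : ℚ) / ((k : ℚ) - (m : ℚ))) = (N : ℚ) / (D : ℚ) := by
    rw [eq_div_iff hD0, hN, Nat.cast_sum, Finset.sum_mul]
    refine Finset.sum_congr rfl fun k hk => ?_
    have hkb := hmem k hk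
    have hc1 : (k : ℚ) - (m : ℚ) = ((k - m : ℕ) : ℚ) := by
      rw [Nat.cast_sub (by omega)]
    have hprodD : ((k - m : ℕ) : ℚ) * ((∏ k' ∈ s.erase k, (k' - m) : ℕ) : ℚ) = (D : ℚ) := by
      have hpe := Finset.mul_prod_erase s (fun x => x - m) hk
      rw [← Nat.cast_mul, hD]
      exact congrArg (fun z : ℕ => (z : ℚ)) hpe
    have hne : ((k - m : ℕ) : ℚ) ≠ 0 := Nat.cast_ne_zero.mpr (by omega)
    rw [Nat.cast_mul, hc1, div_mul_eq_mul_div, ← hprodD]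
    field_simp
  -- the ZMod p sum vanishes
  have hzero : ∑ k ∈ s, ((m + k).choose k : ZMod p) * (((k - m : ℕ)) : ZMod p)⁻¹ = 0 := by
    have hmain := main_zmod p hp3 m hm2
    rw [← hmain]
    refine Finset.sum_nbij' (fun k => k - m) (fun j => j + m) ?_ ?_ ?_ ?_ ?_
    · intro k hk
      have := hmem k hk
      rw [mem_Icc]
      refine ⟨?_, ?_⟩
      · show 1 ≤ k - m; omega
      · show k - m ≤ p - 2*m - 1; omega
    · intro j hj
      simp only [mem_Icc] at hj
      rw [hs, mem_Icc]
      refine ⟨?_, ?_⟩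
      · show m + 1 ≤ j + m; omega
      · show j + m ≤ p - m - 1; omega
    · intro k hk
      have := hmem k hk
      show k - m + m = k; omega
    · intro j hj
      simp only [mem_Icc] at hj
      show j + m - m = j; omega
    · intro k hk
      have hkb := hmem k hk
      have h0 : (m + k).choose k = (m + k).choose m := by
        have h1 := Nat.choose_symm (Nat.le_add_right m k)
        rwa [Nat.add_sub_cancel_left] at h1
      have hch : (m + k).choose k = (m + m + (k - m)).choose m := by
        rw [h0, show m + k = m + m + (k - m) from by omega]
      rw [hch]
  -- p divides N
  have hpN : p ∣ N := by
    rw [← ZMod.natCast_eq_zero_iff]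
    have herase : ∀ k ∈ s, ((∏ k' ∈ s.erase k, (k' - m) : ℕ) : ZMod p)
        = (((k - m : ℕ)) : ZMod p)⁻¹ * (D : ZMod p) := by
      intro k hk
      have hkb := hmem k hk
      have hne : (((k - m : ℕ)) : ZMod p) ≠ 0 := by
        rw [Ne, ZMod.natCast_eq_zero_iff]
        intro h
        have := Nat.le_of_dvd (by omega) h
        omega
      have hmul : (((k - m : ℕ)) : ZMod p) * ((∏ k' ∈ s.erase k, (k' - m) : ℕ) : ZMod p)
          = (D : ZMod p) := by
        have hpe := Finset.mul_prod_erase s (fun x => x - m) hk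
        rw [← Nat.cast_mul, hD]
        exact congrArg (fun z : ℕ => (z : ZMod p)) hpe
      rw [← hmul, ← mul_assoc, inv_mul_cancel₀ hne, one_mul]
    calc (N : ZMod p)
        = ∑ k ∈ s, ((m + k).choose k : ZMod p)
            * ((∏ k' ∈ s.erase k, (k' - m) : ℕ) : ZMod p) := by
          rw [hN, Nat.cast_sum]
          exact Finset.sum_congr rfl fun k _ => by rw [Nat.cast_mul]
      _ = (∑ k ∈ s, ((m + k).choose k : ZMod p) * (((k - m : ℕ)) : ZMod p)⁻¹) * (D : ZMod p) := by
          rw [Finset.sum_mul]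
          refine Finset.sum_congr rfl fun k hk => ?_
          rw [herase k hk]
          ring
      _ = 0 := by rw [hzero, zero_mul]
  have hpD : ¬ (p : ℤ) ∣ (D : ℤ) := by
    rw [Int.natCast_dvd_natCast]
    intro h
    rw [hD] at h
    obtain ⟨k, hk, hdvd⟩ := (Nat.Prime.prime hp').exists_mem_finset_dvd h
    have hkb := hmem k hk
    have := Nat.le_of_dvd (by omega) hdvd
    omega
  rw [hSD]
  have hcast : (((N : ℚ) / (D : ℚ) : ℚ) : ℚ_[p]) = ((N : ℤ) : ℚ_[p]) / ((D : ℤ) : ℚ_[p]) := by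
    push_cast
    ring
  rw [hcast, norm_div]
  have hDnorm : ‖((D : ℤ) : ℚ_[p])‖ = 1 := by
    have hle := Padic.norm_int_le_one (p := p) (D : ℤ)
    rcases lt_or_eq_of_le hle with h | h
    · exact absurd ((Padic.norm_intCast_lt_one_iff (k := (D : ℤ))).mp h) hpD
    · exact h
  have hNnorm : ‖((N : ℤ) : ℚ_[p])‖ ≤ (p : ℝ)⁻¹ := by
    have hdvd : ((p : ℤ) ^ 1) ∣ (N : ℤ) := by
      rw [pow_one]
      exact_mod_cast hpN
    have h2 := (Padic.norm_int_le_pow_iff_dvd ((N : ℤ)) 1).mpr hdvd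
    simpa using h2
  rw [hDnorm, div_one]
  exact hNnorm
end
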